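/- arXiv:0802.3433 — 5 statements merged into one kernel-verified Lean document; each statement's English description precedes it below -/
import Mathlib

section
/- Inserting an extra partial quotient b between positions j and j+1 multiplies the continuant denominator by a factor between (b+1)/2 and b+1: for any positive integers a₁,...,aₙ and b, and any 1 ≤ j < n, (b+1)/2 ≤ q_{n+1}(a₁,...,aⱼ,b,a_{j+1},...,aₙ)/qₙ(a₁,...,aₙ) ≤ b+1. -/
private lemma Qmono (Q : List ℕ → ℕ) (hQ0 : Q [] = 1) (hQ1 : ∀ a : ℕ, Q [a] = a)
    (hQrec : ∀ (l : List ℕ) (a b : ℕ), Q (l ++ [a, b]) = b * Q (l ++ [a]) + Q l)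
    (m : List ℕ) (a : ℕ) (ha : 1 ≤ a) : Q m ≤ Q (m ++ [a]) := by
  rcases m.eq_nil_or_concat with rfl | ⟨m', a', rfl⟩
  · simpa [hQ0, hQ1] using ha
  · simp only [List.concat_eq_append] at *
    have h2 : (m' ++ [a']) ++ [a] = m' ++ [a', a] := by simp
    rw [h2, hQrec m' a' a]
    nlinarith [Nat.zero_le (Q m'), Nat.zero_le (Q (m' ++ [a']))]

private lemma Qpos (Q : List ℕ → ℕ) (hQ0 : Q [] = 1) (hQ1 : ∀ a : ℕ, Q [a] = a)
    (hQrec : ∀ (l : List ℕ) (a b : ℕ), Q (l ++ [a, b]) = b * Q (l ++ [a]) + Q l) :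
    ∀ n (l : List ℕ), l.length ≤ n → (∀ x ∈ l, 0 < x) → 1 ≤ Q l := by
  intro n
  induction n with
  | zero =>
    intro l hl _
    have : l = [] := List.length_eq_zero_iff.mp (Nat.le_zero.mp hl)
    simp [this, hQ0]
  | succ n ih =>
    intro l hl hpos
    rcases l.eq_nil_or_concat with rfl | ⟨m, c, rfl⟩
    · simp [hQ0]
    · simp only [List.concat_eq_append] at *
      rcases m.eq_nil_or_concat with rfl | ⟨m', a, rfl⟩
      · simpa [hQ1, Nat.one_le_iff_ne_zero, Nat.pos_iff_ne_zero] using hpos c (by simp)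
      · simp only [List.concat_eq_append] at *
        have h2 : (m' ++ [a]) ++ [c] = m' ++ [a, c] := by simp
        rw [h2, hQrec m' a c]
        have hc : 1 ≤ c := hpos c (by simp)
        have hlen : (m' ++ [a]).length ≤ n := by
          simp at hl ⊢; omega
        have h1 : 1 ≤ Q (m' ++ [a]) := ih (m' ++ [a]) hlen
          (fun x hx => hpos x (by simp at hx ⊢; tauto))
        nlinarith

private lemma Qkey (Q : List ℕ → ℕ) (hQ0 : Q [] = 1) (hQ1 : ∀ a : ℕ, Q [a] = a)
    (hQrec : ∀ (l : List ℕ) (a b : ℕ), Q (l ++ [a, b]) = b * Q (l ++ [a]) + Q l)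
    (b : ℕ) (hb : 1 ≤ b) :
    ∀ n (l₂ : List ℕ), l₂.length ≤ n → (∀ x ∈ l₂, 0 < x) →
    ∀ (l₁ : List ℕ), l₁ ≠ [] → (∀ x ∈ l₁, 0 < x) →
    Q (l₁ ++ b :: l₂) ≤ (b + 1) * Q (l₁ ++ l₂) ∧
      (b + 1) * Q (l₁ ++ l₂) ≤ 2 * Q (l₁ ++ b :: l₂) := by
  intro n
  induction n with
  | zero =>
    intro l₂ hl _ l₁ h₁ hl₁
    have : l₂ = [] := List.length_eq_zero_iff.mp (Nat.le_zero.mp hl)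
    subst this
    rcases l₁.eq_nil_or_concat with rfl | ⟨m, a, rfl⟩
    · exact absurd rfl h₁
    · simp only [List.concat_eq_append] at *
      have ha : 1 ≤ a := hl₁ a (by simp)
      have h2 : (m ++ [a]) ++ b :: [] = m ++ [a, b] := by simp
      have h3 : (m ++ [a]) ++ ([] : List ℕ) = m ++ [a] := by simp
      rw [h2, h3, hQrec m a b]
      have hm : Q m ≤ Q (m ++ [a]) := Qmono Q hQ0 hQ1 hQrec m a ha
      constructor <;> nlinarith
  | succ n ih =>
    intro l₂ hl hpos l₁ h₁ hl₁
    rcases l₂.eq_nil_or_concat with rfl | ⟨m, c, rfl⟩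
    · exact ih [] (by simp) (by simp) l₁ h₁ hl₁
    · simp only [List.concat_eq_append] at *
      rcases m.eq_nil_or_concat with rfl | ⟨m', a, rfl⟩
      · -- l₂ = [c]
        rcases l₁.eq_nil_or_concat with rfl | ⟨p, a₁, rfl⟩
        · exact absurd rfl h₁
        · simp only [List.concat_eq_append] at *
          have ha₁ : 1 ≤ a₁ := hl₁ a₁ (by simp)
          have hc : 1 ≤ c := hpos c (by simp)
          have e1 : p ++ [a₁] ++ b :: ([] ++ [c]) = (p ++ [a₁]) ++ [b, c] := by simp
          have e2 : p ++ [a₁] ++ ([] ++ [c]) = p ++ [a₁, c] := by simp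
          rw [e1, e2, hQrec (p ++ [a₁]) b c, hQrec p a₁ c]
          have e3 : (p ++ [a₁]) ++ [b] = p ++ [a₁, b] := by simp
          rw [e3, hQrec p a₁ b]
          have hm : Q p ≤ Q (p ++ [a₁]) := Qmono Q hQ0 hQ1 hQrec p a₁ ha₁
          have h4 : Q p ≤ c * Q (p ++ [a₁]) :=
            le_trans hm (Nat.le_mul_of_pos_left _ hc)
          constructor <;> nlinarith [hb, hc, hm, h4, Nat.zero_le (Q p)]
      · -- l₂ = m' ++ [a, c]
        simp only [List.concat_eq_append] at *
        have ha : 1 ≤ a := hpos a (by simp)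
        have hc : 1 ≤ c := hpos c (by simp)
        have hposm : ∀ x ∈ m', 0 < x := fun x hx => hpos x (by simp [hx])
        have hposma : ∀ x ∈ m' ++ [a], 0 < x := fun x hx => hpos x (by simp at hx ⊢; tauto)
        have hlen1 : m'.length ≤ n := by simp at hl ⊢; omega
        have hlen2 : (m' ++ [a]).length ≤ n := by simp at hl ⊢; omega
        obtain ⟨u1, u2⟩ := ih m' hlen1 hposm l₁ h₁ hl₁
        obtain ⟨v1, v2⟩ := ih (m' ++ [a]) hlen2 hposma l₁ h₁ hl₁
        have e1 : l₁ ++ b :: ((m' ++ [a]) ++ [c]) = (l₁ ++ b :: m') ++ [a, c] := by simp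
        have e2 : l₁ ++ ((m' ++ [a]) ++ [c]) = (l₁ ++ m') ++ [a, c] := by simp
        have e3 : (l₁ ++ b :: m') ++ [a] = l₁ ++ b :: (m' ++ [a]) := by simp
        have e4 : (l₁ ++ m') ++ [a] = l₁ ++ (m' ++ [a]) := by simp
        rw [e1, e2, hQrec (l₁ ++ b :: m') a c, hQrec (l₁ ++ m') a c, e3, e4]
        constructor <;> nlinarith

/-- Inserting an extra partial quotient `b` between positions `j` and `j+1`
(`1 ≤ j < n`) multiplies the continued fraction denominator by a factor
between `(b+1)/2` and `b+1`. Here `Q` is the continued fraction denominator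
defined by `q₋₁ = 0`, `q₀ = 1`, `qₙ = aₙqₙ₋₁ + qₙ₋₂`. -/
theorem contfrac_denom_insert
    (Q : List ℕ → ℕ)
    (hQ0 : Q [] = 1)
    (hQ1 : ∀ a : ℕ, Q [a] = a)
    (hQrec : ∀ (l : List ℕ) (a b : ℕ), Q (l ++ [a, b]) = b * Q (l ++ [a]) + Q l)
    (l₁ l₂ : List ℕ) (h₁ : l₁ ≠ []) (h₂ : l₂ ≠ [])
    (hl₁ : ∀ x ∈ l₁, 0 < x) (hl₂ : ∀ x ∈ l₂, 0 < x)
    (b : ℕ) (hb : 0 < b) :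
    ((b : ℝ) + 1) / 2 ≤ (Q (l₁ ++ b :: l₂) : ℝ) / (Q (l₁ ++ l₂) : ℝ) ∧
      (Q (l₁ ++ b :: l₂) : ℝ) / (Q (l₁ ++ l₂) : ℝ) ≤ (b : ℝ) + 1 := by
  obtain ⟨u, v⟩ := Qkey Q hQ0 hQ1 hQrec b hb l₂.length l₂ le_rfl hl₂ l₁ h₁ hl₁
  have hDpos : 1 ≤ Q (l₁ ++ l₂) := by
    refine Qpos Q hQ0 hQ1 hQrec (l₁ ++ l₂).length _ le_rfl ?_
    intro x hx
    rcases List.mem_append.mp hx with h | h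
    · exact hl₁ x h
    · exact hl₂ x h
  have hD : (0 : ℝ) < (Q (l₁ ++ l₂) : ℝ) := by exact_mod_cast hDpos
  constructor
  · rw [div_le_div_iff₀ (by norm_num) hD]
    have h : (((b + 1) * Q (l₁ ++ l₂) : ℕ) : ℝ) ≤ ((2 * Q (l₁ ++ b :: l₂) : ℕ) : ℝ) := by
      exact_mod_cast v
    push_cast at h
    linarith
  · rw [div_le_iff₀ hD]
    have h : ((Q (l₁ ++ b :: l₂) : ℕ) : ℝ) ≤ (((b + 1) * Q (l₁ ++ l₂) : ℕ) : ℝ) := by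
      exact_mod_cast u
    push_cast at h
    linarith
end

section
/- For an irrational x ∈ [0,1), lim_{n→∞} (1/n) log qₙ(x) = (1/2)·2 log((1+√5)/2) if and only if lim_{n→∞} (1/n) Σ_{j=1}^n log aⱼ(x) = 0. Moreover either condition implies lim_{n→∞} (1/n)·#{j ≤ n : aⱼ(x) ≠ 1} = 0. -/
open Filter

/-- The Gauss map `T(x) = 1/x mod 1`, with `T(0) = 0`. -/
noncomputable def gaussMap (x : ℝ) : ℝ := Int.fract (1 / x)

/-- The `(j+1)`-th partial quotient of the continued fraction expansion of `x`. -/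
noncomputable def cfA (x : ℝ) (j : ℕ) : ℕ := ⌊1 / (gaussMap^[j] x)⌋₊

namespace KZQG

noncomputable def gold : ℝ := (1 + Real.sqrt 5) / 2

lemma s5_nonneg : (0:ℝ) ≤ Real.sqrt 5 := Real.sqrt_nonneg 5
lemma s5_sq : Real.sqrt 5 * Real.sqrt 5 = 5 := Real.mul_self_sqrt (by norm_num)
lemma s5_gt : (2.2360 : ℝ) < Real.sqrt 5 := by
  have : (2.2360:ℝ) = Real.sqrt (2.2360^2) := by
    rw [Real.sqrt_sq] <;> norm_num
  rw [this]
  apply Real.sqrt_lt_sqrt (by positivity) (by norm_num)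
lemma s5_lt : Real.sqrt 5 < 2.2361 := by
  have h : Real.sqrt 5 < Real.sqrt (2.2361^2) := by
    apply Real.sqrt_lt_sqrt (by norm_num) (by norm_num)
  rwa [Real.sqrt_sq (by norm_num)] at h

lemma gold_pos : (0:ℝ) < gold := by
  have := s5_nonneg; unfold gold; linarith
lemma one_lt_gold : (1:ℝ) < gold := by
  have := s5_gt; unfold gold; linarith
lemma gold_lt : gold < 1.61805 := by
  have := s5_lt; unfold gold; linarith
lemma gold_sq : gold * gold = gold + 1 := by
  unfold gold; have := s5_sq; nlinarith

lemma log_gold_pos : 0 < Real.log gold := Real.log_pos one_lt_gold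

lemma log_gold_lt : Real.log gold < 0.483 := by
  have h1 : Real.log gold < Real.log 1.61805 :=
    Real.log_lt_log gold_pos gold_lt
  have h2 : Real.log ((1.61805:ℝ)^9) = 9 * Real.log 1.61805 := by
    rw [Real.log_pow]; norm_num
  have h3 : Real.log ((1.61805:ℝ)^9) = Real.log ((1.61805^9)/64) + Real.log 64 := by
    rw [← Real.log_mul (by norm_num) (by norm_num)]; norm_num
  have h4 : Real.log ((1.61805:ℝ)^9/64) ≤ (1.61805^9)/64 - 1 :=
    Real.log_le_sub_one_of_pos (by norm_num)
  have h5 : Real.log (64:ℝ) = 6 * Real.log 2 := by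
    rw [show (64:ℝ) = 2^6 by norm_num, Real.log_pow]; norm_num
  have h6 : Real.log 2 < 0.6931471808 := Real.log_two_lt_d9
  nlinarith

/-- Weighted AM-GM: the key inequality at partial quotient 1. -/
lemma amgm (r : ℝ) (hr : 0 < r) :
    2 * (Real.sqrt 5 * Real.log gold + Real.log r) ≤
      (1 + Real.sqrt 5) * Real.log (r + 1) := by
  have hg := gold_pos
  have hg2 : gold * gold = gold + 1 := gold_sq
  have hgs : gold * Real.sqrt 5 = gold + 2 := by
    unfold gold; linear_combination (1/2) * s5_sq
  have hw1 : (0:ℝ) ≤ 1 / gold := by positivity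
  have hw2 : (0:ℝ) ≤ 1 / (gold * gold) := by positivity
  have hw : 1 / gold + 1 / (gold * gold) = 1 := by
    field_simp
    linear_combination (-1) * hg2
  have hp1 : (0:ℝ) < gold * r := by positivity
  have hp2 : (0:ℝ) < gold * gold := by positivity
  have hG := Real.geom_mean_le_arith_mean2_weighted hw1 hw2 hp1.le hp2.le hw
  have hsum : 1 / gold * (gold * r) + 1 / (gold * gold) * (gold * gold) = r + 1 := by
    field_simp
  rw [hsum] at hG
  have hpowpos : (0:ℝ) < (gold * r) ^ (1 / gold) * (gold * gold) ^ (1 / (gold * gold)) := by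
    positivity
  have hlog := Real.log_le_log hpowpos hG
  rw [Real.log_mul (by positivity) (by positivity),
    Real.log_rpow hp1, Real.log_rpow hp2,
    Real.log_mul hg.ne' hr.ne', Real.log_mul hg.ne' hg.ne'] at hlog
  -- hlog : 1/g * (log gold + log r) + 1/(g*g) * (log gold + log gold) ≤ log (r+1)
  have hm : gold * (Real.log gold + Real.log r) + 2 * Real.log gold
      ≤ (gold * gold) * Real.log (r + 1) := by
    have e : (gold * gold) * (1 / gold * (Real.log gold + Real.log r)
        + 1 / (gold * gold) * (Real.log gold + Real.log gold))
        = gold * (Real.log gold + Real.log r) + 2 * Real.log gold := by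
      field_simp; ring
    calc gold * (Real.log gold + Real.log r) + 2 * Real.log gold
        = (gold * gold) * (1 / gold * (Real.log gold + Real.log r)
            + 1 / (gold * gold) * (Real.log gold + Real.log gold)) := e.symm
      _ ≤ (gold * gold) * Real.log (r + 1) :=
          mul_le_mul_of_nonneg_left hlog (by positivity)
  have e1 : gold * (2 * (Real.sqrt 5 * Real.log gold + Real.log r))
      = 2 * (gold * (Real.log gold + Real.log r) + 2 * Real.log gold) := by
    linear_combination (2 * Real.log gold) * hgs
  have e2 : gold * ((1 + Real.sqrt 5) * Real.log (r + 1))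
      = 2 * ((gold * gold) * Real.log (r + 1)) := by
    linear_combination (Real.log (r+1)) * hgs - 2 * (Real.log (r+1)) * hg2
  have final : gold * (2 * (Real.sqrt 5 * Real.log gold + Real.log r))
      ≤ gold * ((1 + Real.sqrt 5) * Real.log (r + 1)) := by
    rw [e1, e2]; linarith
  exact le_of_mul_le_mul_left final hg

/-- The per-step inequality, scaled by 10. -/
lemma step (a : ℕ) (ha : 1 ≤ a) (r : ℝ) (hr : 1 ≤ r) :
    10 * Real.log gold + (1/5) * Real.log a ≤
      (5 + Real.sqrt 5) * Real.log ((a:ℝ) + 1/r) + (5 - Real.sqrt 5) * Real.log r := by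
  have hrpos : (0:ℝ) < r := lt_of_lt_of_le one_pos hr
  have hlogr : 0 ≤ Real.log r := Real.log_nonneg hr
  have hs := s5_gt
  have hs' := s5_lt
  have hss := s5_sq
  rcases eq_or_lt_of_le ha with h1 | h2
  · -- a = 1
    have ha1 : (a:ℝ) = 1 := by rw [← h1]; norm_num
    rw [ha1, Real.log_one]
    have hA : (1:ℝ) + 1/r = (r+1)/r := by field_simp
    rw [hA, Real.log_div (by positivity) hrpos.ne']
    have h := amgm r hrpos
    have hmul := mul_le_mul_of_nonneg_left h s5_nonneg
    have e1 : Real.sqrt 5 * (2 * (Real.sqrt 5 * Real.log gold + Real.log r))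
        = 10 * Real.log gold + 2 * Real.sqrt 5 * Real.log r := by
      linear_combination (2 * Real.log gold) * hss
    have e2 : Real.sqrt 5 * ((1 + Real.sqrt 5) * Real.log (r + 1))
        = (5 + Real.sqrt 5) * Real.log (r + 1) := by
      linear_combination (Real.log (r+1)) * hss
    rw [e1, e2] at hmul
    nlinarith [hmul]
  · -- a ≥ 2
    have ha2 : (2:ℝ) ≤ (a:ℝ) := by exact_mod_cast h2
    have hl2 : Real.log 2 ≤ Real.log a := Real.log_le_log (by norm_num) ha2
    have hla : 0 < Real.log a := Real.log_pos (by linarith)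
    have hstep1 : Real.log a ≤ Real.log ((a:ℝ) + 1/r) :=
      Real.log_le_log (by linarith) (le_add_of_nonneg_right (by positivity))
    have hlog2 : (0.6931471803:ℝ) < Real.log 2 := Real.log_two_gt_d9
    have hLg : Real.log gold < 0.483 := log_gold_lt
    nlinarith [hstep1, hl2, hla, hlogr,
      mul_le_mul_of_nonneg_left hl2 (by linarith : (0:ℝ) ≤ 5 + Real.sqrt 5 - 1/5)]

lemma gauss_one (y : ℝ) (hy : y ∈ Set.Ioo (0:ℝ) 1) (hi : Irrational y) :
    gaussMap y ∈ Set.Ioo (0:ℝ) 1 ∧ Irrational (gaussMap y) := by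
  have h1 : Irrational (1 / y) := by rw [one_div]; exact hi.inv
  have h2 : Irrational (gaussMap y) := by
    show Irrational (Int.fract (1/y))
    rw [Int.fract]
    exact h1.sub_intCast _
  refine ⟨⟨?_, ?_⟩, h2⟩
  · rcases lt_or_eq_of_le (Int.fract_nonneg (1/y)) with h | h
    · exact h
    · exact absurd h.symm (by simpa [gaussMap] using h2.ne_zero)
  · exact Int.fract_lt_one _

lemma gauss_iter (x : ℝ) (hx : x ∈ Set.Ico (0:ℝ) 1) (hirr : Irrational x) (j : ℕ) :
    gaussMap^[j] x ∈ Set.Ioo (0:ℝ) 1 ∧ Irrational (gaussMap^[j] x) := by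
  induction j with
  | zero =>
    refine ⟨⟨?_, hx.2⟩, hirr⟩
    rcases lt_or_eq_of_le hx.1 with h | h
    · exact h
    · exact absurd h.symm hirr.ne_zero
  | succ n ih =>
    rw [Function.iterate_succ_apply']
    exact gauss_one _ ih.1 ih.2

lemma cfA_one_le (x : ℝ) (hx : x ∈ Set.Ico (0:ℝ) 1) (hirr : Irrational x) (j : ℕ) :
    1 ≤ cfA x j := by
  obtain ⟨⟨h0, h1⟩, -⟩ := gauss_iter x hx hirr j
  have : (1:ℝ) ≤ 1 / gaussMap^[j] x := by
    rw [le_div_iff₀ h0]; linarith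
  exact Nat.le_floor (by exact_mod_cast this)

lemma ofFn_split1 (a : ℕ → ℕ) (n : ℕ) :
    (List.ofFn fun j : Fin (n+1) => a j) = (List.ofFn fun j : Fin n => a j) ++ [a n] := by
  rw [List.ofFn_succ']
  simp [List.concat_eq_append]

lemma ofFn_split2 (a : ℕ → ℕ) (n : ℕ) :
    (List.ofFn fun j : Fin (n+2) => a j) =
      (List.ofFn fun j : Fin n => a j) ++ [a n, a (n+1)] := by
  rw [ofFn_split1 a (n+1), ofFn_split1 a n]
  simp

variable {Q : List ℕ → ℕ} {a : ℕ → ℕ}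

def qd (Q : List ℕ → ℕ) (a : ℕ → ℕ) (n : ℕ) : ℕ := Q (List.ofFn fun j : Fin n => a j)

lemma qd_zero (hQ0 : Q [] = 1) : qd Q a 0 = 1 := by simp [qd, hQ0]

lemma qd_one (hQ1 : ∀ m : ℕ, Q [m] = m) : qd Q a 1 = a 0 := by simp [qd, hQ1]

lemma qd_rec (hQrec : ∀ (l : List ℕ) (m k : ℕ), Q (l ++ [m, k]) = k * Q (l ++ [m]) + Q l)
    (n : ℕ) : qd Q a (n+2) = a (n+1) * qd Q a (n+1) + qd Q a n := by
  unfold qd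
  rw [ofFn_split2, ofFn_split1, hQrec]

lemma qd_one_le (hQ0 : Q [] = 1) (hQ1 : ∀ m : ℕ, Q [m] = m)
    (hQrec : ∀ (l : List ℕ) (m k : ℕ), Q (l ++ [m, k]) = k * Q (l ++ [m]) + Q l)
    (ha : ∀ j, 1 ≤ a j) (n : ℕ) : 1 ≤ qd Q a n := by
  induction n using Nat.twoStepInduction with
  | zero => rw [qd_zero hQ0]
  | one => rw [qd_one hQ1]; exact ha 0
  | more n ih1 ih2 =>
    rw [qd_rec hQrec n]
    have := ha (n+1)
    nlinarith

lemma qd_mono (hQ0 : Q [] = 1) (hQ1 : ∀ m : ℕ, Q [m] = m)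
    (hQrec : ∀ (l : List ℕ) (m k : ℕ), Q (l ++ [m, k]) = k * Q (l ++ [m]) + Q l)
    (ha : ∀ j, 1 ≤ a j) (n : ℕ) : qd Q a n ≤ qd Q a (n+1) := by
  cases n with
  | zero => rw [qd_zero hQ0, qd_one hQ1]; exact ha 0
  | succ n =>
    rw [qd_rec hQrec n]
    have h1 := ha (n+1)
    have h2 := qd_one_le hQ0 hQ1 hQrec ha n
    nlinarith


section Bounds

variable {Q : List ℕ → ℕ} {a : ℕ → ℕ}
variable (hQ0 : Q [] = 1) (hQ1 : ∀ m : ℕ, Q [m] = m)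
  (hQrec : ∀ (l : List ℕ) (m k : ℕ), Q (l ++ [m, k]) = k * Q (l ++ [m]) + Q l)
  (ha : ∀ j, 1 ≤ a j)

lemma b_one_le (ha : ∀ j, 1 ≤ a j) (j : ℕ) : (1:ℝ) ≤ (a j : ℝ) := by exact_mod_cast ha j

lemma P_pos (ha : ∀ j, 1 ≤ a j) (n : ℕ) : (0:ℝ) < ∏ j ∈ Finset.range n, (a j : ℝ) := by
  apply Finset.prod_pos
  intro j _
  exact lt_of_lt_of_le one_pos (b_one_le ha j)

/-- Real version of `qd`. -/
noncomputable def u (Q : List ℕ → ℕ) (a : ℕ → ℕ) (n : ℕ) : ℝ := (qd Q a n : ℝ)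

include hQ0 hQ1 hQrec ha

lemma u_one_le (n : ℕ) : (1:ℝ) ≤ u Q a n := by
  unfold u; exact_mod_cast qd_one_le hQ0 hQ1 hQrec ha n

lemma u_pos (n : ℕ) : (0:ℝ) < u Q a n :=
  lt_of_lt_of_le one_pos (u_one_le hQ0 hQ1 hQrec ha n)

lemma u_mono (n : ℕ) : u Q a n ≤ u Q a (n+1) := by
  unfold u; exact_mod_cast qd_mono hQ0 hQ1 hQrec ha n

lemma u_zero : u Q a 0 = 1 := by
  unfold u; rw [qd_zero hQ0]; norm_num

lemma u_one : u Q a 1 = (a 0 : ℝ) := by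
  unfold u; rw [qd_one hQ1]

lemma u_rec (n : ℕ) : u Q a (n+2) = (a (n+1) : ℝ) * u Q a (n+1) + u Q a n := by
  unfold u; rw [qd_rec hQrec]; push_cast; ring

lemma upper_bound (n : ℕ) :
    u Q a n ≤ gold^n * ∏ j ∈ Finset.range n, (a j : ℝ) := by
  induction n using Nat.twoStepInduction with
  | zero => rw [u_zero hQ0 hQ1 hQrec ha]; norm_num
  | one =>
    rw [u_one hQ0 hQ1 hQrec ha, Finset.prod_range_one, pow_one]
    nlinarith [b_one_le ha 0, one_lt_gold]
  | more n ih1 ih2 =>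
    rw [u_rec hQ0 hQ1 hQrec ha n]
    have hb1 := b_one_le ha n
    have hb2 := b_one_le ha (n+1)
    have hP := (P_pos ha n).le
    have hg := gold_pos
    have hgn : (0:ℝ) < gold ^ n := pow_pos gold_pos n
    have e2 : (∏ j ∈ Finset.range (n+2), (a j : ℝ))
        = (∏ j ∈ Finset.range n, (a j : ℝ)) * (a n : ℝ) * (a (n+1) : ℝ) := by
      rw [Finset.prod_range_succ, Finset.prod_range_succ]
    have e1 : (∏ j ∈ Finset.range (n+1), (a j : ℝ))
        = (∏ j ∈ Finset.range n, (a j : ℝ)) * (a n : ℝ) := Finset.prod_range_succ _ _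
    rw [e2]
    rw [e1] at ih2
    have key1 : (a (n+1) : ℝ) * u Q a (n+1)
        ≤ (a (n+1) : ℝ) * (gold^(n+1) * ((∏ j ∈ Finset.range n, (a j : ℝ)) * (a n : ℝ))) :=
      mul_le_mul_of_nonneg_left ih2 (by linarith)
    have key2 : u Q a n ≤ gold^n * ((∏ j ∈ Finset.range n, (a j : ℝ)) * (a n : ℝ) * (a (n+1) : ℝ)) := by
      calc u Q a n ≤ gold^n * ∏ j ∈ Finset.range n, (a j : ℝ) := ih1
        _ ≤ gold^n * ((∏ j ∈ Finset.range n, (a j : ℝ)) * (a n : ℝ) * (a (n+1) : ℝ)) := by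
            apply mul_le_mul_of_nonneg_left _ hgn.le
            nlinarith [mul_nonneg hP (sub_nonneg.mpr hb1),
              mul_nonneg (mul_nonneg hP (le_trans zero_le_one hb1)) (sub_nonneg.mpr hb2)]
    have hpow : gold^(n+2) = gold^(n+1) + gold^n := by
      have : gold^(n+2) = gold^n * (gold * gold) := by ring
      rw [this, gold_sq]; ring
    calc (a (n+1) : ℝ) * u Q a (n+1) + u Q a n
        ≤ (a (n+1) : ℝ) * (gold^(n+1) * ((∏ j ∈ Finset.range n, (a j : ℝ)) * (a n : ℝ)))
          + gold^n * ((∏ j ∈ Finset.range n, (a j : ℝ)) * (a n : ℝ) * (a (n+1) : ℝ)) := by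
          linarith
      _ = gold^(n+2) * ((∏ j ∈ Finset.range n, (a j : ℝ)) * (a n : ℝ) * (a (n+1) : ℝ)) := by
          rw [hpow]; ring

lemma lower_bound_fib (n : ℕ) : gold^n ≤ gold * u Q a n := by
  induction n using Nat.twoStepInduction with
  | zero => rw [u_zero hQ0 hQ1 hQrec ha]; norm_num; nlinarith [one_lt_gold]
  | one =>
    rw [u_one hQ0 hQ1 hQrec ha, pow_one]
    nlinarith [b_one_le ha 0, gold_pos]
  | more n ih1 ih2 =>
    rw [u_rec hQ0 hQ1 hQrec ha n]
    have hpow : gold^(n+2) = gold^(n+1) + gold^n := by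
      have : gold^(n+2) = gold^n * (gold * gold) := by ring
      rw [this, gold_sq]; ring
    have hb := b_one_le ha (n+1)
    have hu := u_pos hQ0 hQ1 hQrec ha (n+1)
    have hg := gold_pos
    rw [hpow]
    have : gold * u Q a (n+1) ≤ gold * ((a (n+1):ℝ) * u Q a (n+1)) := by
      apply mul_le_mul_of_nonneg_left _ hg.le
      nlinarith
    nlinarith


/-- The telescoped lower bound, scaled by 10. -/
lemma lower_key (n : ℕ) :
    10 * (n:ℝ) * Real.log gold + (1/5) * ∑ j ∈ Finset.range (n+1), Real.log (a j)
      + (5 - Real.sqrt 5) * (Real.log (u Q a (n+1)) - Real.log (u Q a n))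
      ≤ 10 * Real.log (u Q a (n+1)) := by
  induction n with
  | zero =>
    rw [u_zero hQ0 hQ1 hQrec ha, u_one hQ0 hQ1 hQrec ha, Real.log_one,
      Finset.sum_range_one]
    have hb := b_one_le ha 0
    have hlb : 0 ≤ Real.log (a 0) := Real.log_nonneg hb
    nlinarith [s5_gt, s5_lt]
  | succ n ih =>
    have hu0 := u_pos hQ0 hQ1 hQrec ha n
    have hu1 := u_pos hQ0 hQ1 hQrec ha (n+1)
    have hu2 := u_pos hQ0 hQ1 hQrec ha (n+2)
    have hmono := u_mono hQ0 hQ1 hQrec ha n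
    have hr : (1:ℝ) ≤ u Q a (n+1) / u Q a n := (one_le_div hu0).mpr hmono
    have h := step (a (n+1)) (ha (n+1)) (u Q a (n+1) / u Q a n) hr
    have e : (a (n+1):ℝ) + 1/(u Q a (n+1) / u Q a n) = u Q a (n+2) / u Q a (n+1) := by
      rw [one_div_div, u_rec hQ0 hQ1 hQrec ha n]
      field_simp
    rw [e, Real.log_div hu2.ne' hu1.ne', Real.log_div hu1.ne' hu0.ne'] at h
    -- h : 10 L + (1/5) log b(n+1) ≤ (5+s)(log u(n+2) - log u(n+1)) + (5-s)(log u(n+1) - log u n)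
    have hdelta : 0 ≤ Real.log (u Q a (n+1)) - Real.log (u Q a n) := by
      have := Real.log_le_log hu0 hmono
      linarith
    have hs5 : Real.sqrt 5 < 5 := lt_trans s5_lt (by norm_num)
    rw [Finset.sum_range_succ]
    push_cast
    nlinarith [ih, h, mul_nonneg (by linarith : (0:ℝ) ≤ 5 - Real.sqrt 5) hdelta]

lemma lower_log (n : ℕ) :
    10 * (n:ℝ) * Real.log gold + (1/5) * ∑ j ∈ Finset.range n, Real.log (a j)
      ≤ 10 * Real.log (u Q a n) + 10 * Real.log gold := by
  cases n with
  | zero =>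
    rw [u_zero hQ0 hQ1 hQrec ha, Real.log_one]
    simp
    nlinarith [log_gold_pos]
  | succ n =>
    have h := lower_key hQ0 hQ1 hQrec ha n
    have hu0 := u_pos hQ0 hQ1 hQrec ha n
    have hmono := u_mono hQ0 hQ1 hQrec ha n
    have hdelta : 0 ≤ Real.log (u Q a (n+1)) - Real.log (u Q a n) := by
      have := Real.log_le_log hu0 hmono
      linarith
    have hs5 : Real.sqrt 5 < 5 := lt_trans s5_lt (by norm_num)
    have hL := log_gold_pos
    push_cast
    nlinarith [mul_nonneg (by linarith : (0:ℝ) ≤ 5 - Real.sqrt 5) hdelta]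

lemma upper_log (n : ℕ) :
    Real.log (u Q a n) ≤ (n:ℝ) * Real.log gold + ∑ j ∈ Finset.range n, Real.log (a j) := by
  have h := upper_bound hQ0 hQ1 hQrec ha n
  have hP := P_pos ha n
  have hgn : (0:ℝ) < gold ^ n := pow_pos gold_pos n
  have := Real.log_le_log (u_pos hQ0 hQ1 hQrec ha n) h
  rw [Real.log_mul hgn.ne' hP.ne', Real.log_pow,
    Real.log_prod (fun j _ => (lt_of_lt_of_le one_pos (b_one_le ha j)).ne')] at this
  exact_mod_cast this

lemma fib_log (n : ℕ) :
    (n:ℝ) * Real.log gold ≤ Real.log gold + Real.log (u Q a n) := by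
  have h := lower_bound_fib hQ0 hQ1 hQrec ha n
  have hgn : (0:ℝ) < gold ^ n := pow_pos gold_pos n
  have := Real.log_le_log hgn h
  rw [Real.log_pow, Real.log_mul gold_pos.ne' (u_pos hQ0 hQ1 hQrec ha n).ne'] at this
  exact_mod_cast this

end Bounds

section Sums

variable {a : ℕ → ℕ} (ha : ∀ j, 1 ≤ a j)
include ha

lemma S_nonneg (n : ℕ) : 0 ≤ ∑ j ∈ Finset.range n, Real.log (a j) :=
  Finset.sum_nonneg fun j _ => Real.log_nonneg (b_one_le ha j)

lemma card_le_S (n : ℕ) :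
    (((Finset.range n).filter fun j => a j ≠ 1).card : ℝ) * Real.log 2
      ≤ ∑ j ∈ Finset.range n, Real.log (a j) := by
  have h1 : ∀ j ∈ (Finset.range n).filter fun j => a j ≠ 1,
      Real.log 2 ≤ Real.log (a j) := by
    intro j hj
    rw [Finset.mem_filter] at hj
    have h2 : 2 ≤ a j := by
      rcases Nat.lt_or_ge (a j) 2 with h | h
      · interval_cases h' : a j
        · exact absurd (ha j) (by omega)
        · exact absurd rfl hj.2
      · exact h
    exact Real.log_le_log (by norm_num) (by exact_mod_cast h2)
  calc (((Finset.range n).filter fun j => a j ≠ 1).card : ℝ) * Real.log 2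
      ≤ ∑ _j ∈ (Finset.range n).filter fun j => a j ≠ 1, Real.log 2 := by
        rw [Finset.sum_const, nsmul_eq_mul]
    _ ≤ ∑ j ∈ (Finset.range n).filter fun j => a j ≠ 1, Real.log (a j) :=
        Finset.sum_le_sum h1
    _ ≤ ∑ j ∈ Finset.range n, Real.log (a j) :=
        Finset.sum_le_sum_of_subset_of_nonneg (Finset.filter_subset _ _)
          (fun j _ _ => Real.log_nonneg (b_one_le ha j))

end Sums


section Master

variable {Q : List ℕ → ℕ} {a : ℕ → ℕ}
variable (hQ0 : Q [] = 1) (hQ1 : ∀ m : ℕ, Q [m] = m)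
  (hQrec : ∀ (l : List ℕ) (m k : ℕ), Q (l ++ [m, k]) = k * Q (l ++ [m]) + Q l)
  (ha : ∀ j, 1 ≤ a j)

include hQ0 hQ1 hQrec ha

lemma master_forward
    (hS : Tendsto (fun n : ℕ => (1/(n:ℝ)) * ∑ j ∈ Finset.range n, Real.log (a j))
      atTop (nhds 0)) :
    Tendsto (fun n : ℕ => (1/(n:ℝ)) * Real.log (u Q a n)) atTop (nhds (Real.log gold)) := by
  have hlo : Tendsto (fun n : ℕ => Real.log gold - Real.log gold * (1/(n:ℝ)))
      atTop (nhds (Real.log gold)) := by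
    have h1 := tendsto_one_div_atTop_nhds_zero_nat.const_mul (Real.log gold)
    have h2 := ((tendsto_const_nhds : Tendsto (fun _ : ℕ => Real.log gold) atTop (nhds (Real.log gold)))).sub h1
    simpa using h2
  have hhi : Tendsto (fun n : ℕ =>
      Real.log gold + (1/(n:ℝ)) * ∑ j ∈ Finset.range n, Real.log (a j))
      atTop (nhds (Real.log gold)) := by
    have h2 := ((tendsto_const_nhds : Tendsto (fun _ : ℕ => Real.log gold) atTop (nhds (Real.log gold)))).add hS
    simpa using h2
  apply tendsto_of_tendsto_of_tendsto_of_le_of_le' hlo hhi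
  · filter_upwards [eventually_ge_atTop 1] with n hn
    have hn' : (0:ℝ) < (n:ℝ) := by exact_mod_cast Nat.pos_of_ne_zero (by omega)
    have h := fib_log hQ0 hQ1 hQrec ha n
    have e : Real.log gold - Real.log gold * (1/(n:ℝ))
        = (1/(n:ℝ)) * ((n:ℝ) * Real.log gold - Real.log gold) := by
      field_simp
    rw [e]
    apply mul_le_mul_of_nonneg_left (by linarith) (by positivity)
  · filter_upwards [eventually_ge_atTop 1] with n hn
    have hn' : (0:ℝ) < (n:ℝ) := by exact_mod_cast Nat.pos_of_ne_zero (by omega)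
    have h := upper_log hQ0 hQ1 hQrec ha n
    have e : Real.log gold + (1/(n:ℝ)) * ∑ j ∈ Finset.range n, Real.log (a j)
        = (1/(n:ℝ)) * ((n:ℝ) * Real.log gold + ∑ j ∈ Finset.range n, Real.log (a j)) := by
      field_simp
    rw [e]
    apply mul_le_mul_of_nonneg_left h (by positivity)

lemma master_backward
    (hf : Tendsto (fun n : ℕ => (1/(n:ℝ)) * Real.log (u Q a n)) atTop (nhds (Real.log gold))) :
    Tendsto (fun n : ℕ => (1/(n:ℝ)) * ∑ j ∈ Finset.range n, Real.log (a j))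
      atTop (nhds 0) := by
  have hlo : Tendsto (fun _ : ℕ => (0:ℝ)) atTop (nhds 0) := tendsto_const_nhds
  have hhi : Tendsto (fun n : ℕ =>
      50 * ((1/(n:ℝ)) * Real.log (u Q a n)) - 50 * Real.log gold
        + 50 * Real.log gold * (1/(n:ℝ))) atTop (nhds 0) := by
    have h1 := (hf.const_mul 50).sub
      (tendsto_const_nhds : Tendsto (fun _ : ℕ => 50 * Real.log gold) atTop (nhds (50 * Real.log gold)))
    have h2 := tendsto_one_div_atTop_nhds_zero_nat.const_mul (50 * Real.log gold)
    have h3 := h1.add h2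
    simpa using h3
  apply tendsto_of_tendsto_of_tendsto_of_le_of_le' hlo hhi
  · filter_upwards with n
    have : 0 ≤ ∑ j ∈ Finset.range n, Real.log (a j) := S_nonneg ha n
    have : (0:ℝ) ≤ 1/(n:ℝ) := by positivity
    positivity
  · filter_upwards [eventually_ge_atTop 1] with n hn
    have hn' : (0:ℝ) < (n:ℝ) := by exact_mod_cast Nat.pos_of_ne_zero (by omega)
    have h := lower_log hQ0 hQ1 hQrec ha n
    -- S n ≤ 50 log u n + 50 L - 50 n L
    have h2 : ∑ j ∈ Finset.range n, Real.log (a j)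
        ≤ 50 * Real.log (u Q a n) + 50 * Real.log gold - 50 * (n:ℝ) * Real.log gold := by
      linarith
    have h3 := mul_le_mul_of_nonneg_left h2 (by positivity : (0:ℝ) ≤ 1/(n:ℝ))
    calc (1/(n:ℝ)) * ∑ j ∈ Finset.range n, Real.log (a j)
        ≤ (1/(n:ℝ)) * (50 * Real.log (u Q a n) + 50 * Real.log gold
            - 50 * (n:ℝ) * Real.log gold) := h3
      _ = 50 * ((1/(n:ℝ)) * Real.log (u Q a n)) - 50 * Real.log gold
            + 50 * Real.log gold * (1/(n:ℝ)) := by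
          field_simp
          ring

end Master

lemma master_card {a : ℕ → ℕ} (ha : ∀ j, 1 ≤ a j)
    (hS : Tendsto (fun n : ℕ => (1/(n:ℝ)) * ∑ j ∈ Finset.range n, Real.log (a j))
      atTop (nhds 0)) :
    Tendsto (fun n : ℕ =>
      (1/(n:ℝ)) * (((Finset.range n).filter fun j => a j ≠ 1).card : ℝ)) atTop (nhds 0) := by
  have hlog2 : (0:ℝ) < Real.log 2 := Real.log_pos (by norm_num)
  have hhi : Tendsto (fun n : ℕ =>
      (1/Real.log 2) * ((1/(n:ℝ)) * ∑ j ∈ Finset.range n, Real.log (a j)))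
      atTop (nhds 0) := by
    have := hS.const_mul (1/Real.log 2)
    simpa using this
  apply tendsto_of_tendsto_of_tendsto_of_le_of_le' tendsto_const_nhds hhi
  · filter_upwards with n
    positivity
  · filter_upwards with n
    have h := card_le_S ha n
    have h2 : (((Finset.range n).filter fun j => a j ≠ 1).card : ℝ)
        ≤ (1/Real.log 2) * ∑ j ∈ Finset.range n, Real.log (a j) := by
      rw [div_mul_eq_mul_div, le_div_iff₀ hlog2]
      linarith
    have h3 := mul_le_mul_of_nonneg_left h2 (by positivity : (0:ℝ) ≤ 1/(n:ℝ))
    calc (1/(n:ℝ)) * (((Finset.range n).filter fun j => a j ≠ 1).card : ℝ)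
        ≤ (1/(n:ℝ)) * ((1/Real.log 2) * ∑ j ∈ Finset.range n, Real.log (a j)) := h3
      _ = (1/Real.log 2) * ((1/(n:ℝ)) * ∑ j ∈ Finset.range n, Real.log (a j)) := by ring

end KZQG

/-- For an irrational `x ∈ [0,1)`, `lim (1/n) log qₙ(x) = (1/2)·2log((1+√5)/2)`
iff `lim (1/n) Σ_{j=1}^n log aⱼ(x) = 0`, and either condition implies
`lim (1/n)·#{j ≤ n : aⱼ(x) ≠ 1} = 0`.  Here `Q` is the continued fraction
denominator, given by `q₋₁ = 0`, `q₀ = 1`, `qₙ = aₙqₙ₋₁ + qₙ₋₂`. -/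
theorem khintchine_zero_iff_qn_golden
    (Q : List ℕ → ℕ)
    (hQ0 : Q [] = 1)
    (hQ1 : ∀ a : ℕ, Q [a] = a)
    (hQrec : ∀ (l : List ℕ) (a b : ℕ), Q (l ++ [a, b]) = b * Q (l ++ [a]) + Q l)
    (x : ℝ) (hx : x ∈ Set.Ico (0 : ℝ) 1) (hirr : Irrational x) :
    (Tendsto (fun n : ℕ => (1 / (n : ℝ)) * Real.log (Q (List.ofFn fun j : Fin n => cfA x j)))
        atTop (nhds ((1 / 2) * (2 * Real.log ((1 + Real.sqrt 5) / 2)))) ↔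
      Tendsto (fun n : ℕ => (1 / (n : ℝ)) * ∑ j ∈ Finset.range n, Real.log (cfA x j))
        atTop (nhds 0)) ∧
    (Tendsto (fun n : ℕ => (1 / (n : ℝ)) * Real.log (Q (List.ofFn fun j : Fin n => cfA x j)))
        atTop (nhds ((1 / 2) * (2 * Real.log ((1 + Real.sqrt 5) / 2)))) →
      Tendsto (fun n : ℕ =>
          (1 / (n : ℝ)) * (((Finset.range n).filter fun j => cfA x j ≠ 1).card : ℝ))
        atTop (nhds 0)) ∧
    (Tendsto (fun n : ℕ => (1 / (n : ℝ)) * ∑ j ∈ Finset.range n, Real.log (cfA x j))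
        atTop (nhds 0) →
      Tendsto (fun n : ℕ =>
          (1 / (n : ℝ)) * (((Finset.range n).filter fun j => cfA x j ≠ 1).card : ℝ))
        atTop (nhds 0)) := by
  have ha : ∀ j, 1 ≤ cfA x j := KZQG.cfA_one_le x hx hirr
  have hval : (1 / 2 : ℝ) * (2 * Real.log ((1 + Real.sqrt 5) / 2)) = Real.log KZQG.gold := by
    unfold KZQG.gold
    ring
  rw [hval]
  have hfun : ∀ n : ℕ, Real.log ((Q (List.ofFn fun j : Fin n => cfA x j) : ℝ))
      = Real.log (KZQG.u Q (fun j => cfA x j) n) := by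
    intro n
    rfl
  constructor
  · constructor
    · intro h
      exact KZQG.master_backward hQ0 hQ1 hQrec ha h
    · intro h
      exact KZQG.master_forward hQ0 hQ1 hQrec ha h
  constructor
  · intro h
    exact KZQG.master_card ha (KZQG.master_backward hQ0 hQ1 hQrec ha h)
  · intro h
    exact KZQG.master_card ha h
end

section
/- For every ξ ≥ 0 there exists x₀ ∈ [0,1) whose Khintchine exponent γ(x₀) = lim_{n→∞} (1/n) Σ_{j=1}^n log aⱼ(x₀) exists and equals ξ. -/
set_option maxHeartbeats 1000000


open Filter

/-! ### Auxiliary: constructing a real with prescribed continued fraction digits -/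

/-- Finite approximants to the continued fraction `[0; a 0, a 1, ...]`. -/
noncomputable def cfApprox : (ℕ → ℕ) → ℕ → ℝ
  | _, 0 => 1/2
  | a, (n+1) => 1/(a 0 + cfApprox (fun i => a (i+1)) n)

lemma cfApprox_mem (a : ℕ → ℕ) (ha : ∀ i, 1 ≤ a i) (n : ℕ) :
    cfApprox a n ∈ Set.Icc (0:ℝ) 1 := by
  induction n generalizing a with
  | zero => norm_num [cfApprox]
  | succ n ih =>
    have h0 := ih (fun i => a (i+1)) (fun i => ha _)
    have h1 : (1:ℝ) ≤ (a 0 : ℝ) := by exact_mod_cast ha 0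
    have hd : (1:ℝ) ≤ (a 0 : ℝ) + cfApprox (fun i => a (i+1)) n := by
      have := h0.1; linarith
    constructor
    · simp only [cfApprox]
      positivity
    · simp only [cfApprox]
      rw [div_le_one (by linarith)]
      linarith

lemma cfApprox_succ (a : ℕ → ℕ) (n : ℕ) :
    cfApprox a (n+1) = 1/((a 0 : ℝ) + cfApprox (fun i => a (i+1)) n) := by
  simp [cfApprox]

lemma cfApprox_succ_mem (a : ℕ → ℕ) (ha : ∀ i, 1 ≤ a i) (n : ℕ) :
    cfApprox a (n+1) ∈ Set.Icc (1/((a 0 : ℝ)+1)) (1/(a 0 : ℝ)) := by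
  have h0 := cfApprox_mem (fun i => a (i+1)) (fun i => ha _) n
  have h1 : (1:ℝ) ≤ (a 0 : ℝ) := by exact_mod_cast ha 0
  rw [cfApprox_succ]
  constructor
  · apply one_div_le_one_div_of_le (by linarith [h0.1]) (by linarith [h0.2])
  · apply one_div_le_one_div_of_le (by linarith) (by linarith [h0.1])

lemma cfApprox_diff_le (n : ℕ) : ∀ a : ℕ → ℕ, (∀ i, 1 ≤ a i) →
    |cfApprox a (n+1) - cfApprox a n| ≤ (3/2) * (2/3)^n := by
  induction n using Nat.strong_induction_on with
  | _ n ih =>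
    match n with
    | 0 =>
      intro a ha
      have h1 := cfApprox_mem a ha 1
      have h0 := cfApprox_mem a ha 0
      rw [abs_le]
      constructor
      · nlinarith [h1.1, h0.2]
      · nlinarith [h1.2, h0.1]
    | 1 =>
      intro a ha
      have h1 := cfApprox_mem a ha 2
      have h0 := cfApprox_mem a ha 1
      rw [abs_le]
      constructor
      · nlinarith [h1.1, h0.2]
      · nlinarith [h1.2, h0.1]
    | (n+2) =>
      intro a ha
      set a' : ℕ → ℕ := fun i => a (i+1) with ha'def
      set a'' : ℕ → ℕ := fun i => a' (i+1) with ha''def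
      have ha' : ∀ i, 1 ≤ a' i := fun i => ha _
      have ha'' : ∀ i, 1 ≤ a'' i := fun i => ha' _
      have key := ih n (by omega) a'' ha''
      set s : ℝ := cfApprox a'' (n+1) with hs
      set t : ℝ := cfApprox a'' n with ht
      have hsmem : s ∈ Set.Icc (0:ℝ) 1 := cfApprox_mem a'' ha'' (n+1)
      have htmem : t ∈ Set.Icc (0:ℝ) 1 := cfApprox_mem a'' ha'' n
      set A1 : ℝ := (a' 0 : ℝ) with hA1def
      set A0 : ℝ := (a 0 : ℝ) with hA0def
      have hA1 : (1:ℝ) ≤ A1 := by rw [hA1def]; exact_mod_cast ha' 0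
      have hA0 : (1:ℝ) ≤ A0 := by rw [hA0def]; exact_mod_cast ha 0
      set u : ℝ := cfApprox a' (n+2) with hudef
      set v : ℝ := cfApprox a' (n+1) with hvdef
      have hu : u = 1/(A1 + s) := cfApprox_succ a' (n+1)
      have hv : v = 1/(A1 + t) := cfApprox_succ a' n
      have hx2 : cfApprox a (n+3) = 1/(A0 + u) := cfApprox_succ a (n+2)
      have hx1 : cfApprox a (n+2) = 1/(A0 + v) := cfApprox_succ a (n+1)
      have humem := cfApprox_succ_mem a' ha' (n+1)
      have hvmem := cfApprox_succ_mem a' ha' n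
      have hul : 1/(A1+1) ≤ u := humem.1
      have hvl : 1/(A1+1) ≤ v := hvmem.1
      have hfrpos : (0:ℝ) < 1/(A1+1) := by positivity
      have hspos : (0:ℝ) < A1 + s := by linarith [hsmem.1]
      have htpos : (0:ℝ) < A1 + t := by linarith [htmem.1]
      have hupos : (0:ℝ) < A0 + u := by linarith
      have hvpos : (0:ℝ) < A0 + v := by linarith
      have e1 : cfApprox a (n+3) - cfApprox a (n+2) = (v - u)/((A0+u)*(A0+v)) := by
        rw [hx2, hx1, one_div, one_div, inv_sub_inv hupos.ne' hvpos.ne']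
        ring_nf
      have e2 : v - u = (s - t)/((A1+s)*(A1+t)) := by
        rw [hu, hv, one_div, one_div, inv_sub_inv htpos.ne' hspos.ne']
        ring_nf
      have b1 : (1 + 1/(A1+1))^2 ≤ (A0+u)*(A0+v) := by
        have h1 : 1 + 1/(A1+1) ≤ A0 + u := by linarith
        have h2 : 1 + 1/(A1+1) ≤ A0 + v := by linarith
        have hp : (0:ℝ) < 1 + 1/(A1+1) := by positivity
        nlinarith
      have b2 : A1^2 ≤ (A1+s)*(A1+t) := by nlinarith [hsmem.1, htmem.1]
      have contraction : 9/4 ≤ A1^2 * (1 + 1/(A1+1))^2 := by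
        have hden : (0:ℝ) < A1 + 1 := by linarith
        rw [← sub_nonneg]
        have expand : A1^2 * (1 + 1/(A1+1))^2 - 9/4
            = (A1^2*(A1+2)^2 - (9/4)*(A1+1)^2)/((A1+1)^2) := by
          field_simp; ring
        rw [expand]
        apply div_nonneg _ (by positivity)
        nlinarith [mul_nonneg (show (0:ℝ) ≤ (A1-1)*(2*A1+3) by nlinarith)
          (show (0:ℝ) ≤ A1*(A1+2)+(3/2)*(A1+1) by nlinarith)]
      have hprod : A1^2 * (1 + 1/(A1+1))^2 ≤ ((A1+s)*(A1+t)) * ((A0+u)*(A0+v)) :=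
        mul_le_mul b2 b1 (by positivity) (by positivity)
      have hcomb : 9/4 ≤ ((A1+s)*(A1+t)) * ((A0+u)*(A0+v)) := le_trans contraction hprod
      have habs : |cfApprox a (n+3) - cfApprox a (n+2)| ≤ (4/9) * |s - t| := by
        have hXpos : (0:ℝ) < (A1+s)*(A1+t)*((A0+u)*(A0+v)) :=
          mul_pos (mul_pos hspos htpos) (mul_pos hupos hvpos)
        rw [e1, e2, div_div, abs_div, abs_of_pos hXpos]
        rw [div_le_iff₀ hXpos]
        nlinarith [abs_nonneg (s - t), hcomb,
          mul_le_mul_of_nonneg_left hcomb (abs_nonneg (s - t))]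
      calc |cfApprox a (n+3) - cfApprox a (n+2)| ≤ (4/9) * |s - t| := habs
        _ ≤ (4/9) * ((3/2) * (2/3)^n) := by nlinarith [key, abs_nonneg (s - t)]
        _ = (3/2) * (2/3)^(n+2) := by ring

lemma cfApprox_cauchy (a : ℕ → ℕ) (ha : ∀ i, 1 ≤ a i) : CauchySeq (cfApprox a) := by
  apply cauchySeq_of_le_geometric (2/3) (3/2) (by norm_num)
  intro n
  rw [dist_comm, Real.dist_eq]
  exact cfApprox_diff_le n a ha

/-- The value of the infinite continued fraction `[0; a 0, a 1, ...]`. -/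
noncomputable def cfVal (a : ℕ → ℕ) : ℝ := limUnder atTop (cfApprox a)

lemma tendsto_cfApprox (a : ℕ → ℕ) (ha : ∀ i, 1 ≤ a i) :
    Tendsto (cfApprox a) atTop (nhds (cfVal a)) :=
  (cfApprox_cauchy a ha).tendsto_limUnder

lemma cfVal_mem (a : ℕ → ℕ) (ha : ∀ i, 1 ≤ a i) : cfVal a ∈ Set.Icc (0:ℝ) 1 := by
  constructor
  · exact ge_of_tendsto (tendsto_cfApprox a ha) (Eventually.of_forall fun n => (cfApprox_mem a ha n).1)
  · exact le_of_tendsto (tendsto_cfApprox a ha) (Eventually.of_forall fun n => (cfApprox_mem a ha n).2)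

lemma cfVal_eq (a : ℕ → ℕ) (ha : ∀ i, 1 ≤ a i) :
    cfVal a = 1/((a 0 : ℝ) + cfVal (fun i => a (i+1))) := by
  have ha' : ∀ i, 1 ≤ (fun i => a (i+1)) i := fun i => ha _
  have h1 : Tendsto (fun n => cfApprox a (n+1)) atTop (nhds (cfVal a)) :=
    (tendsto_cfApprox a ha).comp (tendsto_add_atTop_nat 1)
  have hA0 : (1:ℝ) ≤ (a 0 : ℝ) := by exact_mod_cast ha 0
  have hden : (a 0 : ℝ) + cfVal (fun i => a (i+1)) ≠ 0 := by
    have := (cfVal_mem _ ha').1; positivity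
  have h2 : Tendsto (fun n => cfApprox a (n+1)) atTop
      (nhds (1/((a 0 : ℝ) + cfVal (fun i => a (i+1))))) := by
    have : (fun n => cfApprox a (n+1)) = fun n => 1/((a 0 : ℝ) + cfApprox (fun i => a (i+1)) n) := by
      funext n; simp [cfApprox]
    rw [this]
    exact (tendsto_const_nhds.div ((tendsto_const_nhds.add (tendsto_cfApprox _ ha'))) hden)
  exact tendsto_nhds_unique h1 h2

lemma cfVal_pos (a : ℕ → ℕ) (ha : ∀ i, 1 ≤ a i) : 0 < cfVal a := by
  rw [cfVal_eq a ha]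
  have ha' : ∀ i, 1 ≤ (fun i => a (i+1)) i := fun i => ha _
  have hA0 : (1:ℝ) ≤ (a 0 : ℝ) := by exact_mod_cast ha 0
  have := (cfVal_mem _ ha').1
  positivity

lemma cfVal_lt_one (a : ℕ → ℕ) (ha : ∀ i, 1 ≤ a i) : cfVal a < 1 := by
  rw [cfVal_eq a ha]
  have ha' : ∀ i, 1 ≤ (fun i => a (i+1)) i := fun i => ha _
  have hA0 : (1:ℝ) ≤ (a 0 : ℝ) := by exact_mod_cast ha 0
  have hpos := cfVal_pos _ ha'
  rw [div_lt_one (by linarith)]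
  linarith

lemma gaussMap_cfVal (a : ℕ → ℕ) (ha : ∀ i, 1 ≤ a i) :
    gaussMap (cfVal a) = cfVal (fun i => a (i+1)) := by
  have ha' : ∀ i, 1 ≤ (fun i => a (i+1)) i := fun i => ha _
  have hpos := cfVal_pos _ ha'
  have hlt := cfVal_lt_one _ ha'
  have hA0 : (1:ℝ) ≤ (a 0 : ℝ) := by exact_mod_cast ha 0
  have hden : (a 0 : ℝ) + cfVal (fun i => a (i+1)) ≠ 0 := by positivity
  have hinv : 1/(cfVal a) = (a 0 : ℝ) + cfVal (fun i => a (i+1)) := by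
    rw [cfVal_eq a ha, one_div_one_div]
  rw [gaussMap, hinv]
  have : ((a 0 : ℕ) : ℝ) = ((a 0 : ℤ) : ℝ) := by push_cast; ring
  rw [this, Int.fract_intCast_add, Int.fract_eq_self.mpr ⟨le_of_lt hpos, hlt⟩]

lemma gaussMap_iter_cfVal (a : ℕ → ℕ) (ha : ∀ i, 1 ≤ a i) (j : ℕ) :
    gaussMap^[j] (cfVal a) = cfVal (fun i => a (i+j)) := by
  induction j generalizing a with
  | zero => simp
  | succ j ih =>
    rw [Function.iterate_succ_apply, gaussMap_cfVal a ha,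
      ih (fun i => a (i+1)) (fun i => ha _)]
    rfl

lemma cfA_cfVal (a : ℕ → ℕ) (ha : ∀ i, 1 ≤ a i) (j : ℕ) :
    cfA (cfVal a) j = a j := by
  rw [cfA, gaussMap_iter_cfVal a ha j]
  set b : ℕ → ℕ := fun i => a (i+j) with hb
  have hb1 : ∀ i, 1 ≤ b i := fun i => ha _
  have hb' : ∀ i, 1 ≤ (fun i => b (i+1)) i := fun i => hb1 _
  have hinv : 1/(cfVal b) = (b 0 : ℝ) + cfVal (fun i => b (i+1)) := by
    rw [cfVal_eq b hb1, one_div_one_div]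
  rw [hinv]
  have hpos := cfVal_pos _ hb'
  have hlt := cfVal_lt_one _ hb'
  have : ⌊(b 0 : ℝ) + cfVal (fun i => b (i+1))⌋₊ = b 0 := by
    rw [Nat.floor_eq_iff (by positivity)]
    constructor
    · linarith
    · push_cast; linarith
  rw [this]
  simp [hb]

/-! ### Irrationality -/

lemma rat_gauss_den_lt (q : ℚ) (h0 : 0 < q) (h1 : q < 1) :
    (Int.fract (1/q)).den < q.den ∧ gaussMap (q:ℝ) = ((Int.fract (1/q) : ℚ) : ℝ) := by
  constructor
  · have hnum : 0 < q.num := Rat.num_pos.mpr h0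
    have hq : (1:ℚ)/q = ((q.den : ℤ) : ℚ) / ((q.num : ℤ) : ℚ) := by
      conv_lhs => rw [← Rat.num_div_den q]
      rw [one_div, inv_div]
      push_cast
      ring
    have hfr : Int.fract (1/q) = (((q.den : ℤ) - ⌊(1:ℚ)/q⌋ * q.num : ℤ) : ℚ) / ((q.num : ℤ) : ℚ) := by
      rw [Int.fract, hq]
      push_cast
      field_simp
    have hdvd : ((Int.fract (1/q)).den : ℤ) ∣ q.num := by
      rw [hfr, ← Rat.divInt_eq_div]
      exact Rat.den_dvd _ _
    have hle : ((Int.fract (1/q)).den : ℤ) ≤ q.num := Int.le_of_dvd hnum hdvd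
    have hnd : q.num < (q.den : ℤ) := (Rat.lt_one_iff_num_lt_denom.mpr h1)
    exact_mod_cast lt_of_le_of_lt hle hnd
  · rw [gaussMap, Rat.cast_fract]
    congr 1
    push_cast
    ring

lemma irrational_of_gauss_iter (x : ℝ)
    (h : ∀ j, gaussMap^[j] x ∈ Set.Ioo (0:ℝ) 1) : Irrational x := by
  rw [Irrational]
  intro hx
  obtain ⟨q, hq⟩ := hx
  -- strong induction on denominator
  have key : ∀ d : ℕ, ∀ q : ℚ, q.den ≤ d →
      ¬ (∀ j, gaussMap^[j] ((q:ℚ):ℝ) ∈ Set.Ioo (0:ℝ) 1) := by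
    intro d
    induction d with
    | zero => intro q hq' _; exact absurd hq' (by simpa using q.den_nz)
    | succ d ih =>
      intro q hqd hall
      have h0 := hall 0
      simp only [Function.iterate_zero, id_eq] at h0
      have hq0 : 0 < q := by exact_mod_cast h0.1
      have hq1 : q < 1 := by exact_mod_cast h0.2
      obtain ⟨hden, hcast⟩ := rat_gauss_den_lt q hq0 hq1
      apply ih (Int.fract (1/q)) (by omega)
      intro j
      have := hall (j+1)
      rwa [Function.iterate_succ_apply, hcast] at this
  rw [← hq] at h
  exact key q.den q le_rfl h

/-! ### The digit sequence realizing exponent ξ -/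

lemma floor_mul_diff (p : ℝ) (hp0 : 0 ≤ p) (hp1 : p ≤ 1) (j : ℕ) :
    ⌊((j:ℝ)+1)*p⌋ = ⌊(j:ℝ)*p⌋ ∨ ⌊((j:ℝ)+1)*p⌋ = ⌊(j:ℝ)*p⌋ + 1 := by
  have h1 : ⌊(j:ℝ)*p⌋ ≤ ⌊((j:ℝ)+1)*p⌋ := by
    apply Int.floor_le_floor; nlinarith
  have h2 : ⌊((j:ℝ)+1)*p⌋ ≤ ⌊(j:ℝ)*p⌋ + 1 := by
    have : ((j:ℝ)+1)*p ≤ (j:ℝ)*p + 1 := by nlinarith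
    calc ⌊((j:ℝ)+1)*p⌋ ≤ ⌊(j:ℝ)*p + 1⌋ := Int.floor_le_floor this
      _ = ⌊(j:ℝ)*p⌋ + 1 := by rw [Int.floor_add_one]
  omega

/-- Every `ξ ≥ 0` is attained as the Khintchine exponent
`γ(x₀) = lim (1/n) Σ_{j=1}^n log aⱼ(x₀)` of some `x₀ ∈ [0,1)`. -/
theorem khintchine_exponent_attained (ξ : ℝ) (hξ : 0 ≤ ξ) :
    ∃ x₀ : ℝ, x₀ ∈ Set.Ico (0 : ℝ) 1 ∧ Irrational x₀ ∧
      Tendsto (fun n : ℕ => (1 / (n : ℝ)) * ∑ j ∈ Finset.range n, Real.log (cfA x₀ j))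
        atTop (nhds ξ) := by
  -- choose a digit A ≥ 2 with log A ≥ ξ, and density p = ξ / log A
  set A : ℕ := max 2 ⌈Real.exp ξ⌉₊ with hA
  have hA2 : 2 ≤ A := le_max_left _ _
  have hAge : Real.exp ξ ≤ (A : ℝ) := by
    calc Real.exp ξ ≤ (⌈Real.exp ξ⌉₊ : ℝ) := Nat.le_ceil _
      _ ≤ (A : ℝ) := by exact_mod_cast le_max_right _ _
  have hA1 : (1:ℝ) < (A:ℝ) := by exact_mod_cast lt_of_lt_of_le one_lt_two hA2
  have hlogA : 0 < Real.log A := Real.log_pos hA1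
  have hξle : ξ ≤ Real.log A := by
    calc ξ = Real.log (Real.exp ξ) := (Real.log_exp ξ).symm
      _ ≤ Real.log A := Real.log_le_log (Real.exp_pos ξ) hAge
  set p : ℝ := ξ / Real.log A with hp
  have hp0 : 0 ≤ p := div_nonneg hξ hlogA.le
  have hp1 : p ≤ 1 := (div_le_one hlogA).mpr hξle
  have hpξ : p * Real.log A = ξ := div_mul_cancel₀ ξ hlogA.ne'
  -- digit sequence
  set a : ℕ → ℕ := fun j => if ⌊((j:ℝ)+1)*p⌋ = ⌊(j:ℝ)*p⌋ then 1 else A with hadef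
  have ha : ∀ i, 1 ≤ a i := by
    intro i; simp only [hadef]; split
    · exact le_rfl
    · omega
  refine ⟨cfVal a, ⟨(cfVal_pos a ha).le, cfVal_lt_one a ha⟩, ?_, ?_⟩
  · apply irrational_of_gauss_iter
    intro j
    rw [gaussMap_iter_cfVal a ha j]
    exact ⟨cfVal_pos _ (fun i => ha _), cfVal_lt_one _ (fun i => ha _)⟩
  · -- the sum telescopes
    have hlog : ∀ j, Real.log (cfA (cfVal a) j)
        = ((⌊((j:ℝ)+1)*p⌋ : ℝ) - (⌊(j:ℝ)*p⌋ : ℝ)) * Real.log A := by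
      intro j
      rw [cfA_cfVal a ha j]
      simp only [hadef]
      rcases floor_mul_diff p hp0 hp1 j with heq | heq
      · rw [if_pos heq, heq]
        simp
      · rw [if_neg (by omega), heq]
        push_cast
        ring
    have hsum : ∀ n, ∑ j ∈ Finset.range n, Real.log (cfA (cfVal a) j)
        = (⌊(n:ℝ)*p⌋ : ℝ) * Real.log A := by
      intro n
      calc ∑ j ∈ Finset.range n, Real.log (cfA (cfVal a) j)
          = ∑ j ∈ Finset.range n, ((⌊((j:ℝ)+1)*p⌋ : ℝ) - (⌊(j:ℝ)*p⌋ : ℝ)) * Real.log A := by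
            exact Finset.sum_congr rfl fun j _ => hlog j
        _ = (∑ j ∈ Finset.range n, ((⌊((j:ℝ)+1)*p⌋ : ℝ) - (⌊(j:ℝ)*p⌋ : ℝ))) * Real.log A := by
            rw [Finset.sum_mul]
        _ = ((⌊(n:ℝ)*p⌋ : ℝ) - (⌊(0:ℝ)*p⌋ : ℝ)) * Real.log A := by
            congr 1
            have := Finset.sum_range_sub (f := fun j => ((⌊(j:ℝ)*p⌋ : ℝ))) n
            simpa using this
        _ = (⌊(n:ℝ)*p⌋ : ℝ) * Real.log A := by norm_num
    simp only [hsum]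
    -- now show (1/n) * ⌊np⌋ * log A → p * log A = ξ
    rw [← hpξ]
    have hmain : Tendsto (fun n : ℕ => (1/(n:ℝ)) * ((⌊(n:ℝ)*p⌋ : ℝ) * Real.log A)) atTop
        (nhds (p * Real.log A)) := by
      apply tendsto_of_tendsto_of_tendsto_of_le_of_le'
        (g := fun n : ℕ => (p - 1/(n:ℝ)) * Real.log A)
        (h := fun _ : ℕ => p * Real.log A)
      · have : Tendsto (fun n : ℕ => p - 1/(n:ℝ)) atTop (nhds (p - 0)) :=
          tendsto_const_nhds.sub (tendsto_one_div_atTop_nhds_zero_nat)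
        rw [sub_zero] at this
        simpa using this.mul_const (Real.log A)
      · exact tendsto_const_nhds
      · filter_upwards [eventually_gt_atTop 0] with n hn
        have hnpos : (0:ℝ) < (n:ℝ) := by exact_mod_cast hn
        have hfl : (n:ℝ)*p - 1 ≤ (⌊(n:ℝ)*p⌋ : ℝ) := by
          linarith [Int.sub_one_lt_floor ((n:ℝ)*p)]
        have : (p - 1/(n:ℝ)) * Real.log A ≤ (1/(n:ℝ)) * ((⌊(n:ℝ)*p⌋ : ℝ) * Real.log A) := by
          rw [show (1/(n:ℝ)) * ((⌊(n:ℝ)*p⌋ : ℝ) * Real.log A) = ((⌊(n:ℝ)*p⌋ : ℝ)/(n:ℝ)) * Real.log A by ring]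
          apply mul_le_mul_of_nonneg_right _ hlogA.le
          rw [le_div_iff₀ hnpos]
          calc (p - 1/(n:ℝ)) * (n:ℝ) = (n:ℝ)*p - 1 := by field_simp
            _ ≤ (⌊(n:ℝ)*p⌋ : ℝ) := hfl
        exact this
      · filter_upwards [eventually_gt_atTop 0] with n hn
        have hnpos : (0:ℝ) < (n:ℝ) := by exact_mod_cast hn
        have hfl : (⌊(n:ℝ)*p⌋ : ℝ) ≤ (n:ℝ)*p := Int.floor_le _
        rw [show (1/(n:ℝ)) * ((⌊(n:ℝ)*p⌋ : ℝ) * Real.log A) = ((⌊(n:ℝ)*p⌋ : ℝ)/(n:ℝ)) * Real.log A by ring]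
        apply mul_le_mul_of_nonneg_right _ hlogA.le
        rw [div_le_iff₀ hnpos]
        calc (⌊(n:ℝ)*p⌋ : ℝ) ≤ (n:ℝ)*p := hfl
          _ = p * (n:ℝ) := by ring
    exact hmain
end

section
/- For every λ ≥ 2 log((1+√5)/2) there exists x₀ ∈ [0,1) whose Lyapunov exponent λ(x₀) = lim_{n→∞} (1/n) log|(Tⁿ)'(x₀)| exists and equals λ. -/
open Filter

/-- `(Tⁿ)'(x) = ∏_{j=0}^{n-1} T'(Tʲx)` with `T'(y) = −1/y²`. -/
noncomputable def derivTn (x : ℝ) (n : ℕ) : ℝ :=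
  ∏ j ∈ Finset.range n, (-(1 / (gaussMap^[j] x) ^ 2))

noncomputable section
namespace LyapAux

/-- fixed point of `y ↦ 1/(b+y)`. -/
def pfix (b : ℕ) : ℝ := (Real.sqrt ((b:ℝ)^2+4) - b)/2

lemma sqrt_sq (b : ℕ) : Real.sqrt ((b:ℝ)^2+4) ^ 2 = (b:ℝ)^2 + 4 :=
  Real.sq_sqrt (by positivity)

lemma pfix_pos (b : ℕ) : 0 < pfix b := by
  have h := sqrt_sq b
  have h0 : 0 ≤ Real.sqrt ((b:ℝ)^2+4) := Real.sqrt_nonneg _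
  have hb : (0:ℝ) ≤ (b:ℝ) := Nat.cast_nonneg b
  unfold pfix
  nlinarith

lemma pfix_lt_one {b : ℕ} (hb : 1 ≤ b) : pfix b < 1 := by
  have h := sqrt_sq b
  have h0 : 0 ≤ Real.sqrt ((b:ℝ)^2+4) := Real.sqrt_nonneg _
  have hb' : (1:ℝ) ≤ (b:ℝ) := by exact_mod_cast hb
  unfold pfix
  nlinarith

lemma pfix_mul (b : ℕ) : pfix b * ((b:ℝ) + pfix b) = 1 := by
  have h := sqrt_sq b
  unfold pfix
  nlinarith

lemma pfix_fixed (b : ℕ) : 1/((b:ℝ) + pfix b) = pfix b := by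
  have h1 : (0:ℝ) < (b:ℝ) + pfix b := by
    have := pfix_pos b; have : (0:ℝ) ≤ (b:ℝ) := Nat.cast_nonneg b; positivity
  field_simp
  nlinarith [pfix_mul b]

/-- `-log (pfix b)`. -/
def ell (b : ℕ) : ℝ := Real.log ((b:ℝ) + pfix b)

lemma ell_one : ell 1 = Real.log ((1 + Real.sqrt 5) / 2) := by
  unfold ell pfix
  norm_num
  ring_nf

lemma one_lt_base {b : ℕ} (hb : 1 ≤ b) : 1 < (b:ℝ) + pfix b := by
  have := pfix_pos b
  have : (1:ℝ) ≤ (b:ℝ) := by exact_mod_cast hb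
  linarith [pfix_pos b]

lemma ell_pos {b : ℕ} (hb : 1 ≤ b) : 0 < ell b := Real.log_pos (one_lt_base hb)

/-- the large digit. -/
def A' (lam : ℝ) : ℕ := ⌊Real.exp lam⌋₊ + 2

lemma two_le_A' (lam : ℝ) : 2 ≤ A' lam := Nat.le_add_left 2 _

lemma lam_le_logA (lam : ℝ) : lam ≤ Real.log (A' lam) := by
  have h1 : Real.exp lam ≤ (A' lam : ℝ) := by
    have := Nat.lt_floor_add_one (Real.exp lam)
    unfold A'
    push_cast
    linarith
  calc lam = Real.log (Real.exp lam) := (Real.log_exp lam).symm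
    _ ≤ _ := Real.log_le_log (Real.exp_pos _) h1

lemma lam_le_ellA (lam : ℝ) : lam ≤ ell (A' lam) := by
  refine (lam_le_logA lam).trans (Real.log_le_log ?_ ?_)
  · have := two_le_A' lam; positivity
  · linarith [pfix_pos (A' lam)]

lemma ell1_lt_ellA (lam : ℝ) : ell 1 < ell (A' lam) := by
  apply Real.log_lt_log (by linarith [one_lt_base (le_refl 1)])
  have h2 : (2:ℝ) ≤ (A' lam : ℝ) := by exact_mod_cast two_le_A' lam
  have := pfix_lt_one (le_refl 1)
  have := pfix_pos (A' lam)
  push_cast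
  linarith

def beta' (lam : ℝ) : ℝ := (lam - 2*ell 1)/(2*ell (A' lam) - 2*ell 1)

lemma denom_pos (lam : ℝ) : 0 < 2*ell (A' lam) - 2*ell 1 := by
  linarith [ell1_lt_ellA lam]

lemma beta_nonneg {lam : ℝ} (hlam : 2 * ell 1 ≤ lam) : 0 ≤ beta' lam :=
  div_nonneg (by linarith) (le_of_lt (denom_pos lam))

lemma beta_le_half (lam : ℝ) : beta' lam ≤ 1/2 := by
  rw [beta', div_le_iff₀ (denom_pos lam)]
  have h1 := lam_le_ellA lam
  have h2 := ell_pos (le_refl 1)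
  linarith

lemma beta_spec (lam : ℝ) : 2*ell 1 + beta' lam * (2*ell (A' lam) - 2*ell 1) = lam := by
  rw [beta', div_mul_cancel₀]
  · ring
  · exact ne_of_gt (denom_pos lam)

lemma ell_def (b : ℕ) : ell b = Real.log ((b:ℝ) + pfix b) := rfl


def u (lam : ℝ) (k : ℕ) : ℕ := ⌊beta' lam * ((k:ℝ)+1)^2⌋₊ - ⌊beta' lam * (k:ℝ)^2⌋₊

lemma floor_sq_mono {lam : ℝ} (hlam : 2 * ell 1 ≤ lam) (k : ℕ) :
    ⌊beta' lam * (k:ℝ)^2⌋₊ ≤ ⌊beta' lam * ((k:ℝ)+1)^2⌋₊ := by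
  apply Nat.floor_le_floor
  have h0 := beta_nonneg hlam
  have hk : (0:ℝ) ≤ (k:ℝ) := Nat.cast_nonneg k
  nlinarith

lemma floor_sq_add_u {lam : ℝ} (hlam : 2 * ell 1 ≤ lam) (k : ℕ) :
    ⌊beta' lam * ((k:ℝ)+1)^2⌋₊ = ⌊beta' lam * (k:ℝ)^2⌋₊ + u lam k := by
  have := floor_sq_mono hlam k
  unfold u
  omega

lemma u_le {lam : ℝ} (hlam : 2 * ell 1 ≤ lam) (k : ℕ) : u lam k ≤ k + 1 := by
  have h0 := beta_nonneg hlam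
  have hh := beta_le_half lam
  have hk : (0:ℝ) ≤ (k:ℝ) := Nat.cast_nonneg k
  have h1 : beta' lam * ((k:ℝ)+1)^2 ≤ beta' lam * (k:ℝ)^2 + ((k+1 : ℕ):ℝ) := by
    push_cast
    nlinarith
  have h2 : ⌊beta' lam * ((k:ℝ)+1)^2⌋₊ ≤ ⌊beta' lam * (k:ℝ)^2⌋₊ + (k+1) := by
    calc ⌊beta' lam * ((k:ℝ)+1)^2⌋₊ ≤ ⌊beta' lam * (k:ℝ)^2 + ((k+1:ℕ):ℝ)⌋₊ :=
          Nat.floor_le_floor h1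
      _ = ⌊beta' lam * (k:ℝ)^2⌋₊ + (k+1) := Nat.floor_add_natCast (by positivity) _
  unfold u
  omega

def dig (lam : ℝ) (j : ℕ) : ℕ :=
  if j - (Nat.sqrt j)^2 < u lam (Nat.sqrt j) then A' lam else 1

lemma one_le_dig (lam : ℝ) (j : ℕ) : 1 ≤ dig lam j := by
  unfold dig; split
  · linarith [two_le_A' lam]
  · exact le_refl 1

lemma dig_le_A (lam : ℝ) (j : ℕ) : dig lam j ≤ A' lam := by
  unfold dig; split
  · exact le_refl _
  · linarith [two_le_A' lam]

lemma dig_eq_A_iff (lam : ℝ) (j : ℕ) :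
    dig lam j = A' lam ↔ j - (Nat.sqrt j)^2 < u lam (Nat.sqrt j) := by
  have h2 := two_le_A' lam
  unfold dig
  split
  · simp_all
  · constructor
    · intro h; omega
    · intro h; exact absurd h (by assumption)

/-- number of occurrences of the digit `A` among the first `n` digits -/
def cnt (lam : ℝ) (n : ℕ) : ℕ :=
  ((Finset.range n).filter (fun j => dig lam j = A' lam)).card

lemma sqrt_eq_of_mem {K j : ℕ} (h1 : K^2 ≤ j) (h2 : j < (K+1)^2) : Nat.sqrt j = K :=
  le_antisymm (Nat.le_of_lt_succ (Nat.sqrt_lt'.2 h2)) (Nat.le_sqrt'.2 h1)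

lemma range_split {m n : ℕ} (h : m ≤ n) :
    Finset.range n = Finset.range m ∪ Finset.Ico m n := by
  rw [Finset.range_eq_Ico, Finset.range_eq_Ico]
  exact (Finset.Ico_union_Ico_eq_Ico (Nat.zero_le _) h).symm

lemma cnt_sq {lam : ℝ} (hlam : 2 * ell 1 ≤ lam) (K : ℕ) : cnt lam (K^2) = ⌊beta' lam * (K:ℝ)^2⌋₊ := by
  induction K with
  | zero => simp [cnt]
  | succ K ih =>
    have hKK : K^2 ≤ (K+1)^2 := Nat.pow_le_pow_left (by omega) 2
    have hdisj : Disjoint (Finset.range (K^2)) (Finset.Ico (K^2) ((K+1)^2)) := by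
      rw [Finset.range_eq_Ico]
      exact Finset.Ico_disjoint_Ico_consecutive 0 (K^2) ((K+1)^2)
    have hfilter : (Finset.Ico (K^2) ((K+1)^2)).filter (fun j => dig lam j = A' lam)
        = Finset.Ico (K^2) (K^2 + u lam K) := by
      ext j
      simp only [Finset.mem_filter, Finset.mem_Ico, dig_eq_A_iff]
      constructor
      · rintro ⟨⟨hj1, hj2⟩, hc⟩
        rw [sqrt_eq_of_mem hj1 hj2] at hc
        omega
      · intro ⟨hj1, hj2⟩
        have hub : K^2 + u lam K ≤ (K+1)^2 := by
          have := u_le hlam K; nlinarith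
        have hj2' : j < (K+1)^2 := lt_of_lt_of_le hj2 hub
        rw [sqrt_eq_of_mem hj1 hj2']
        omega
    have hstep : cnt lam ((K+1)^2) = cnt lam (K^2) + u lam K := by
      unfold cnt
      rw [range_split hKK, Finset.filter_union, Finset.card_union_of_disjoint
        (Finset.disjoint_filter_filter hdisj), hfilter, Nat.card_Ico]
      omega
    rw [hstep, ih, ← floor_sq_add_u hlam]
    push_cast
    norm_num

lemma cnt_mono (lam : ℝ) : Monotone (cnt lam) := by
  intro m n h
  exact Finset.card_le_card (Finset.filter_subset_filter _ (Finset.range_subset_range.2 h))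

lemma cnt_le_add (lam : ℝ) {m n : ℕ} (h : m ≤ n) : cnt lam n ≤ cnt lam m + (n - m) := by
  unfold cnt
  rw [range_split h, Finset.filter_union]
  calc _ ≤ ((Finset.range m).filter (fun j => dig lam j = A' lam)).card
        + ((Finset.Ico m n).filter (fun j => dig lam j = A' lam)).card :=
        Finset.card_union_le _ _
    _ ≤ _ := by
        gcongr
        calc ((Finset.Ico m n).filter (fun j => dig lam j = A' lam)).card
            ≤ (Finset.Ico m n).card := Finset.card_filter_le _ _
          _ = n - m := Nat.card_Ico m n

lemma cnt_est {lam : ℝ} (hlam : 2 * ell 1 ≤ lam) (n : ℕ) :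
    |(cnt lam n : ℝ) - beta' lam * n| ≤ 2 * Nat.sqrt n + 2 := by
  set K := Nat.sqrt n with hK
  have h1 : K^2 ≤ n := Nat.sqrt_le' n
  have h2 : n < (K+1)^2 := Nat.lt_succ_sqrt' n
  have hb0 := beta_nonneg hlam
  have hb1 : beta' lam ≤ 1 := le_trans (beta_le_half lam) (by norm_num)
  have hlow : (⌊beta' lam * (K:ℝ)^2⌋₊ : ℝ) ≤ cnt lam n := by
    rw [← cnt_sq hlam K]
    exact_mod_cast cnt_mono lam h1
  have hfl : beta' lam * (K:ℝ)^2 - 1 ≤ (⌊beta' lam * (K:ℝ)^2⌋₊ : ℝ) := by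
    have := Nat.lt_floor_add_one (beta' lam * (K:ℝ)^2)
    linarith
  have hupp : (cnt lam n : ℝ) ≤ beta' lam * (K:ℝ)^2 + ((n : ℝ) - (K:ℝ)^2) := by
    have hle := cnt_le_add lam h1
    have hfl2 : (⌊beta' lam * (K:ℝ)^2⌋₊ : ℝ) ≤ beta' lam * (K:ℝ)^2 :=
      Nat.floor_le (by positivity)
    calc (cnt lam n : ℝ) ≤ ((cnt lam (K^2) + (n - K^2) : ℕ) : ℝ) := by exact_mod_cast hle
      _ = (⌊beta' lam * (K:ℝ)^2⌋₊ : ℝ) + ((n:ℝ) - (K:ℝ)^2) := by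
          rw [cnt_sq hlam K]; push_cast [Nat.cast_sub h1]; ring
      _ ≤ _ := by linarith
  have hgap : (n:ℝ) - (K:ℝ)^2 ≤ 2*K + 1 := by
    have : (n:ℝ) < ((K:ℝ)+1)^2 := by exact_mod_cast h2
    nlinarith
  have hK2n : (K:ℝ)^2 ≤ (n:ℝ) := by exact_mod_cast h1
  rw [abs_le]
  constructor
  · have : beta' lam * (n:ℝ) - beta' lam * (K:ℝ)^2 ≤ 2*K+1 := by nlinarith
    linarith
  · nlinarith

/-- number of digit changes among the first `n` positions -/
def chg (lam : ℝ) (n : ℕ) : ℕ :=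
  ((Finset.range n).filter (fun j => dig lam j ≠ dig lam (j+1))).card

lemma change_boundary {lam : ℝ} {j : ℕ} (h : dig lam j ≠ dig lam (j+1)) :
    j + 1 = (Nat.sqrt (j+1))^2 ∨ j + 1 = (Nat.sqrt (j+1))^2 + u lam (Nat.sqrt (j+1)) := by
  by_contra hc
  push_neg at hc
  obtain ⟨hc1, hc2⟩ := hc
  set K := Nat.sqrt (j+1) with hKdef
  have h1 : K^2 ≤ j+1 := Nat.sqrt_le' _
  have h2 : j+1 < (K+1)^2 := Nat.lt_succ_sqrt' _
  have h1' : K^2 ≤ j := by omega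
  have h2' : j < (K+1)^2 := by omega
  have hsj : Nat.sqrt j = K := sqrt_eq_of_mem h1' h2'
  apply h
  unfold dig
  rw [hsj, ← hKdef]
  have hiff : (j - K^2 < u lam K) ↔ (j + 1 - K^2 < u lam K) := by omega
  rw [if_congr hiff rfl rfl]

lemma chg_le (lam : ℝ) (n : ℕ) : chg lam n ≤ 2 * (Nat.sqrt n + 1) := by
  have hmap : ∀ j ∈ (Finset.range n).filter (fun j => dig lam j ≠ dig lam (j+1)),
      Nat.sqrt (j+1) ∈ Finset.range (Nat.sqrt n + 1) := by
    intro j hj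
    simp only [Finset.mem_filter, Finset.mem_range] at hj ⊢
    exact Nat.lt_succ_of_le (Nat.sqrt_le_sqrt hj.1)
  have hcard := Finset.card_le_mul_card_image_of_maps_to hmap 2 ?_
  · calc chg lam n ≤ 2 * (Finset.range (Nat.sqrt n + 1)).card := hcard
      _ = 2 * (Nat.sqrt n + 1) := by rw [Finset.card_range]
  · intro K _
    have hsub : ((Finset.range n).filter (fun j => dig lam j ≠ dig lam (j+1))).filter
        (fun j => Nat.sqrt (j+1) = K) ⊆ {K^2 - 1, K^2 + u lam K - 1} := by
      intro j hj
      simp only [Finset.mem_filter] at hj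
      obtain ⟨⟨_, hne⟩, hs⟩ := hj
      rcases change_boundary hne with hh | hh <;>
        · rw [hs] at hh
          simp only [Finset.mem_insert, Finset.mem_singleton]
          omega
    calc _ ≤ ({K^2 - 1, K^2 + u lam K - 1} : Finset ℕ).card := Finset.card_le_card hsub
      _ ≤ 2 := (Finset.card_insert_le _ _).trans (by simp)


lemma dig_one_or_A (lam : ℝ) (j : ℕ) : dig lam j = 1 ∨ dig lam j = A' lam := by
  unfold dig; split
  · right; rfl
  · left; rfl

lemma cnt_card (lam : ℝ) (n : ℕ) :
    cnt lam n = ((Finset.range n).filter (fun j => dig lam j = A' lam)).card := rfl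

lemma chg_card (lam : ℝ) (n : ℕ) :
    chg lam n = ((Finset.range n).filter (fun j => dig lam j ≠ dig lam (j+1))).card := rfl

/-- contraction constant -/
def kap (lam : ℝ) : ℝ := (((A' lam : ℝ)+1)/((A' lam : ℝ)+2))^2

lemma kap_nonneg (lam : ℝ) : 0 ≤ kap lam := sq_nonneg _

lemma kap_lt_one (lam : ℝ) : kap lam < 1 := by
  have h0 : (0:ℝ) ≤ (A' lam : ℝ) := Nat.cast_nonneg _
  have h1 : ((A' lam : ℝ)+1)/((A' lam : ℝ)+2) < 1 := by
    rw [div_lt_one (by linarith)]; linarith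
  have h2 : (0:ℝ) ≤ ((A' lam : ℝ)+1)/((A' lam : ℝ)+2) := by positivity
  unfold kap
  nlinarith

lemma contraction (lam : ℝ) {b : ℕ} (hb1 : 1 ≤ b) (hbA : b ≤ A' lam) {y z : ℝ}
    (hy1 : 1/((A' lam : ℝ)+1) ≤ y) (hy2 : y ≤ 1)
    (hz1 : 1/((A' lam : ℝ)+1) ≤ z) (hz2 : z ≤ 1) :
    |1/((b:ℝ)+y) - 1/((b:ℝ)+z)| ≤ kap lam * |y - z| := by
  have hA0 : (0:ℝ) < (A' lam : ℝ) + 1 := by positivity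
  have hb1' : (1:ℝ) ≤ (b:ℝ) := by exact_mod_cast hb1
  have hy0 : 0 < y := lt_of_lt_of_le (by positivity) hy1
  have hz0 : 0 < z := lt_of_lt_of_le (by positivity) hz1
  have hby : (0:ℝ) < (b:ℝ) + y := by linarith
  have hbz : (0:ℝ) < (b:ℝ) + z := by linarith
  have hlb : ((A' lam : ℝ)+2)/((A' lam : ℝ)+1) ≤ (b:ℝ) + y := by
    have : ((A' lam : ℝ)+2)/((A' lam : ℝ)+1) = 1 + 1/((A' lam : ℝ)+1) := by
      field_simp
      ring
    rw [this]; linarith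
  have hlbz : ((A' lam : ℝ)+2)/((A' lam : ℝ)+1) ≤ (b:ℝ) + z := by
    have : ((A' lam : ℝ)+2)/((A' lam : ℝ)+1) = 1 + 1/((A' lam : ℝ)+1) := by
      field_simp
      ring
    rw [this]; linarith
  have hdiff : 1/((b:ℝ)+y) - 1/((b:ℝ)+z) = (z - y)/(((b:ℝ)+y)*((b:ℝ)+z)) := by
    field_simp
    ring
  rw [hdiff, abs_div, abs_of_pos (by positivity : (0:ℝ) < ((b:ℝ)+y)*((b:ℝ)+z))]
  have hq : (0:ℝ) < ((A' lam : ℝ)+2)/((A' lam : ℝ)+1) := by positivity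
  have hP : (((A' lam : ℝ)+2)/((A' lam : ℝ)+1))^2 ≤ ((b:ℝ)+y)*((b:ℝ)+z) := by
    nlinarith
  calc |z - y| / (((b:ℝ)+y)*((b:ℝ)+z))
      ≤ |z - y| / ((((A' lam : ℝ)+2)/((A' lam : ℝ)+1))^2) := by
        apply div_le_div_of_nonneg_left (abs_nonneg _) (by positivity) hP
    _ = kap lam * |y - z| := by
        rw [abs_sub_comm]
        unfold kap
        rw [div_pow]
        field_simp

/-- approximating sequence for the tails -/
def G (lam : ℝ) : ℕ → ℕ → ℝ
  | 0 => fun _ => pfix (A' lam)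
  | (m+1) => fun k => 1/((dig lam k : ℝ) + G lam m (k+1))

lemma pfix_mem (lam : ℝ) {b : ℕ} (hb1 : 1 ≤ b) (hbA : b ≤ A' lam) :
    1/((A' lam : ℝ)+1) ≤ pfix b ∧ pfix b ≤ 1 := by
  have h1 := pfix_pos b
  have h2 := pfix_lt_one hb1
  have hbA' : (b:ℝ) ≤ (A' lam : ℝ) := by exact_mod_cast hbA
  constructor
  · rw [← pfix_fixed b]
    apply div_le_div_of_nonneg_left one_pos.le (by positivity)
    linarith
  · linarith

lemma G_mem (lam : ℝ) (m k : ℕ) :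
    1/((A' lam : ℝ)+1) ≤ G lam m k ∧ G lam m k ≤ 1 := by
  induction m generalizing k with
  | zero =>
    exact pfix_mem lam (le_trans one_le_two (two_le_A' lam)) (le_refl _)
  | succ m ih =>
    obtain ⟨h1, h2⟩ := ih (k+1)
    have hd1 : (1:ℝ) ≤ (dig lam k : ℝ) := by exact_mod_cast one_le_dig lam k
    have hdA : (dig lam k : ℝ) ≤ (A' lam : ℝ) := by exact_mod_cast dig_le_A lam k
    have hpos : (0:ℝ) < (dig lam k : ℝ) + G lam m (k+1) := by
      have : (0:ℝ) < 1/((A' lam : ℝ)+1) := by positivity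
      linarith
    constructor
    · show 1/((A' lam : ℝ)+1) ≤ 1/((dig lam k : ℝ) + G lam m (k+1))
      apply div_le_div_of_nonneg_left one_pos.le hpos
      linarith
    · show 1/((dig lam k : ℝ) + G lam m (k+1)) ≤ 1
      rw [div_le_one hpos]
      have : (0:ℝ) < 1/((A' lam : ℝ)+1) := by positivity
      linarith

lemma G_cauchy_step (lam : ℝ) (m k : ℕ) :
    |G lam (m+1) k - G lam m k| ≤ (kap lam)^m := by
  induction m generalizing k with
  | zero =>
    obtain ⟨g1, g2⟩ := G_mem lam 1 k
    obtain ⟨h1, h2⟩ := G_mem lam 0 k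
    have : (0:ℝ) < 1/((A' lam : ℝ)+1) := by positivity
    rw [pow_zero, abs_le]
    constructor <;> linarith
  | succ m ih =>
    show |1/((dig lam k : ℝ) + G lam (m+1) (k+1)) - 1/((dig lam k : ℝ) + G lam m (k+1))|
        ≤ (kap lam)^(m+1)
    obtain ⟨hy1, hy2⟩ := G_mem lam (m+1) (k+1)
    obtain ⟨hz1, hz2⟩ := G_mem lam m (k+1)
    calc |1/((dig lam k : ℝ) + G lam (m+1) (k+1)) - 1/((dig lam k : ℝ) + G lam m (k+1))|
        ≤ kap lam * |G lam (m+1) (k+1) - G lam m (k+1)| :=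
          contraction lam (one_le_dig lam k) (dig_le_A lam k) hy1 hy2 hz1 hz2
      _ ≤ kap lam * (kap lam)^m := by
          have := ih (k+1)
          exact mul_le_mul_of_nonneg_left this (kap_nonneg lam)
      _ = (kap lam)^(m+1) := by ring

lemma exists_xv (lam : ℝ) :
    ∃ xv : ℕ → ℝ, ∀ k, Tendsto (fun m => G lam m k) atTop (nhds (xv k)) := by
  have hc : ∀ k, CauchySeq (fun m => G lam m k) := by
    intro k
    apply cauchySeq_of_le_geometric (kap lam) 1 (kap_lt_one lam)
    intro n
    rw [Real.dist_eq, abs_sub_comm, one_mul]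
    exact G_cauchy_step lam n k
  choose xv hxv using fun k => cauchySeq_tendsto_of_complete (hc k)
  exact ⟨xv, hxv⟩

section xv
variable {lam : ℝ} {xv : ℕ → ℝ}
  (hxv : ∀ k, Tendsto (fun m => G lam m k) atTop (nhds (xv k)))
include hxv

lemma xv_mem (k : ℕ) : 1/((A' lam : ℝ)+1) ≤ xv k ∧ xv k ≤ 1 := by
  exact ⟨ge_of_tendsto' (hxv k) (fun m => (G_mem lam m k).1),
    le_of_tendsto' (hxv k) (fun m => (G_mem lam m k).2)⟩

lemma xv_mem' (k : ℕ) : 1/((A' lam : ℝ)+1) ≤ xv k :=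
  ge_of_tendsto' (hxv k) (fun m => (G_mem lam m k).1)

lemma xv_pos (k : ℕ) : 0 < xv k :=
  lt_of_lt_of_le (by positivity) (xv_mem' hxv k)

lemma xv_le_one (k : ℕ) : xv k ≤ 1 :=
  le_of_tendsto' (hxv k) (fun m => (G_mem lam m k).2)

lemma xv_rec (k : ℕ) : xv k = 1/((dig lam k : ℝ) + xv (k+1)) := by
  have hd1 : (1:ℝ) ≤ (dig lam k : ℝ) := by exact_mod_cast one_le_dig lam k
  have hpos : (0:ℝ) < (dig lam k : ℝ) + xv (k+1) := by
    have := xv_pos hxv (k+1); linarith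
  have h1 : Tendsto (fun m => G lam (m+1) k) atTop (nhds (xv k)) :=
    (hxv k).comp (tendsto_add_atTop_nat 1)
  have h2 : Tendsto (fun m => 1/((dig lam k : ℝ) + G lam m (k+1))) atTop
      (nhds (1/((dig lam k : ℝ) + xv (k+1)))) := by
    apply Tendsto.div tendsto_const_nhds (Tendsto.const_add _ (hxv (k+1))) (ne_of_gt hpos)
  exact tendsto_nhds_unique h1 h2

lemma xv_lt_one (k : ℕ) : xv k < 1 := by
  rw [xv_rec hxv k]
  have hd1 : (1:ℝ) ≤ (dig lam k : ℝ) := by exact_mod_cast one_le_dig lam k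
  have hp := xv_pos hxv (k+1)
  rw [div_lt_one (by linarith)]
  linarith

lemma xv_inv (k : ℕ) : 1/(xv k) = (dig lam k : ℝ) + xv (k+1) := by
  rw [xv_rec hxv k, one_div_one_div]

lemma gauss_xv (k : ℕ) : gaussMap (xv k) = xv (k+1) := by
  unfold gaussMap
  rw [xv_inv hxv k, Int.fract_natCast_add]
  exact Int.fract_eq_self.2 ⟨le_of_lt (xv_pos hxv (k+1)), xv_lt_one hxv (k+1)⟩

lemma gauss_iter (j : ℕ) : gaussMap^[j] (xv 0) = xv j := by
  induction j with
  | zero => rfl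
  | succ j ih => rw [Function.iterate_succ_apply', ih, gauss_xv hxv]

end xv

/-- rational orbits of the Gauss map hit `0`. -/
lemma rat_orbit (p : ℕ) : ∀ d : ℕ, 0 < d → p < d → ∃ n, gaussMap^[n] ((p:ℝ)/(d:ℝ)) = 0 := by
  induction p using Nat.strong_induction_on with
  | _ p ih =>
    intro d hd hpd
    rcases Nat.eq_zero_or_pos p with hp | hp
    · subst hp
      exact ⟨0, by simp⟩
    · have hstep : gaussMap ((p:ℝ)/(d:ℝ)) = ((d % p : ℕ):ℝ)/(p:ℝ) := by
        unfold gaussMap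
        have hpr : (0:ℝ) < (p:ℝ) := by exact_mod_cast hp
        have hdr : (0:ℝ) < (d:ℝ) := by exact_mod_cast hd
        have h1 : 1/((p:ℝ)/(d:ℝ)) = (d:ℝ)/(p:ℝ) := by
          rw [one_div_div]
        rw [h1]
        have h2 : (((d:ℚ)/(p:ℚ) : ℚ) : ℝ) = ((d:ℝ)/(p:ℝ)) := by push_cast; ring
        have hfl : ⌊(d:ℝ)/(p:ℝ)⌋ = ((d / p : ℕ) : ℤ) := by
          rw [← h2, Rat.floor_cast, Rat.floor_natCast_div_natCast]
          exact (Int.natCast_ediv d p).symm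
        rw [Int.fract, hfl]
        have hmod : (p:ℝ) * ((d/p : ℕ):ℝ) + ((d % p : ℕ):ℝ) = (d:ℝ) := by
          exact_mod_cast Nat.div_add_mod d p
        have hc : ((((d/p : ℕ)):ℤ):ℝ) = ((d/p : ℕ):ℝ) := by rw [Int.cast_natCast]
        rw [hc, eq_div_iff (ne_of_gt hpr), sub_mul, div_mul_cancel₀ _ (ne_of_gt hpr)]
        linarith [hmod]
      obtain ⟨n, hn⟩ := ih (d % p) (Nat.mod_lt d hp) p hp (Nat.mod_lt d hp)
      exact ⟨n+1, by rw [Function.iterate_succ_apply, hstep, hn]⟩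

lemma xv_irrational {lam : ℝ} {xv : ℕ → ℝ}
    (hxv : ∀ k, Tendsto (fun m => G lam m k) atTop (nhds (xv k))) :
    Irrational (xv 0) := by
  rw [Irrational]
  rintro ⟨q, hq⟩
  have h0 : 0 < xv 0 := xv_pos hxv 0
  have h1 : xv 0 < 1 := xv_lt_one hxv 0
  have hq0 : 0 < q := by
    rw [← Rat.cast_lt (K := ℝ), hq]
    exact_mod_cast h0
  have hq1 : q < 1 := by
    rw [← Rat.cast_lt (K := ℝ), hq]
    exact_mod_cast h1
  have hnum : 0 < q.num := Rat.num_pos.2 hq0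
  have hlt : q.num < (q.den : ℤ) := (Rat.num_lt_denom_iff.2 hq1)
  set p := q.num.toNat with hp
  have hcast : (q : ℝ) = (p:ℝ)/(q.den:ℝ) := by
    rw [Rat.cast_def]
    congr 1
    rw [hp]
    exact_mod_cast (Int.toNat_of_nonneg hnum.le).symm
  obtain ⟨n, hn⟩ := rat_orbit p q.den q.pos (by omega)
  rw [← hcast, hq, gauss_iter hxv n] at hn
  exact absurd hn (ne_of_gt (xv_pos hxv n))




lemma abs_log_sub_le {a b : ℝ} (ha : 1 ≤ a) (hb : 1 ≤ b) :
    |Real.log a - Real.log b| ≤ |a - b| := by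
  have key : ∀ p q : ℝ, 1 ≤ p → 1 ≤ q → q ≤ p → Real.log p - Real.log q ≤ p - q := by
    intro p q hp hq hqp
    have hq0 : (0:ℝ) < q := by linarith
    have hp0 : (0:ℝ) < p := by linarith
    have h1 : Real.log p - Real.log q = Real.log (p/q) := (Real.log_div (ne_of_gt hp0) (ne_of_gt hq0)).symm
    rw [h1]
    have h2 : Real.log (p/q) ≤ p/q - 1 := Real.log_le_sub_one_of_pos (by positivity)
    have h3 : p/q - 1 = (p - q)/q := by field_simp
    have h4 : (p - q)/q ≤ p - q := div_le_self (by linarith) hq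
    linarith
  rcases le_total b a with h | h
  · rw [abs_of_nonneg (by linarith [Real.log_le_log (by linarith : (0:ℝ) < b) h] :
        (0:ℝ) ≤ Real.log a - Real.log b), abs_of_nonneg (by linarith : (0:ℝ) ≤ a - b)]
    exact key a b ha hb h
  · rw [abs_sub_comm, abs_sub_comm a b,
      abs_of_nonneg (by linarith [Real.log_le_log (by linarith : (0:ℝ) < a) h] :
        (0:ℝ) ≤ Real.log b - Real.log a), abs_of_nonneg (by linarith : (0:ℝ) ≤ b - a)]
    exact key b a hb ha h

lemma tendsto_sqrt_div : Tendsto (fun n : ℕ => ((Nat.sqrt n : ℝ))/(n:ℝ)) atTop (nhds 0) := by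
  have hsq : Tendsto (fun n : ℕ => Nat.sqrt n) atTop atTop := by
    apply Filter.tendsto_atTop_atTop.2
    intro b
    exact ⟨b*b, fun n hn => Nat.le_sqrt.2 hn⟩
  have h1 : Tendsto (fun n : ℕ => 1/((Nat.sqrt n : ℕ):ℝ)) atTop (nhds 0) :=
    tendsto_one_div_atTop_nhds_zero_nat.comp hsq
  apply squeeze_zero' (g := fun n : ℕ => 1/((Nat.sqrt n : ℕ):ℝ))
  · filter_upwards [eventually_ge_atTop 1] with n hn
    positivity
  · filter_upwards [eventually_ge_atTop 1] with n hn
    have h2 : 1 ≤ Nat.sqrt n := Nat.le_sqrt.2 (by omega)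
    have h3 : (0:ℝ) < (Nat.sqrt n : ℝ) := by exact_mod_cast h2
    have h4 : ((Nat.sqrt n : ℝ)) * (Nat.sqrt n : ℝ) ≤ (n:ℝ) := by
      exact_mod_cast Nat.sqrt_le n
    rw [div_le_div_iff₀ (by positivity) h3]
    nlinarith
  · exact h1

section main
variable {lam : ℝ} {xv : ℕ → ℝ}
  (hxv : ∀ k, Tendsto (fun m => G lam m k) atTop (nhds (xv k)))
include hxv

lemma E_le_one (j : ℕ) : |xv (j+1) - pfix (dig lam j)| ≤ 1 := by
  obtain ⟨h1, h2⟩ := xv_mem hxv (j+1)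
  have h3 := pfix_pos (dig lam j)
  have h4 := pfix_lt_one (one_le_dig lam j)
  have h5 : (0:ℝ) < 1/((A' lam : ℝ)+1) := by positivity
  rw [abs_le]; constructor <;> linarith

lemma E_contr {j : ℕ} (h : dig lam j = dig lam (j+1)) :
    |xv (j+1) - pfix (dig lam j)| ≤ kap lam * |xv (j+1+1) - pfix (dig lam (j+1))| := by
  have hrec : xv (j+1) = 1/((dig lam (j+1) : ℝ) + xv (j+2)) := xv_rec hxv (j+1)
  have hfix : pfix (dig lam j) = 1/((dig lam j : ℝ) + pfix (dig lam j)) :=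
    (pfix_fixed (dig lam j)).symm
  rw [hrec, hfix, h]
  obtain ⟨hy1, hy2⟩ := xv_mem hxv (j+1+1)
  obtain ⟨hz1, hz2⟩ := pfix_mem lam (one_le_dig lam (j+1)) (dig_le_A lam (j+1))
  rw [← h]
  have := contraction lam (one_le_dig lam j) (dig_le_A lam j) hy1 hy2 hz1 hz2
  rw [h] at this ⊢
  exact this

lemma sum_E_le (n : ℕ) :
    ∑ j ∈ Finset.range n, |xv (j+1) - pfix (dig lam j)|
      ≤ ((chg lam n : ℝ) + 1)/(1 - kap lam) := by
  set E : ℕ → ℝ := fun j => |xv (j+1) - pfix (dig lam j)| with hE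
  have hstep : ∀ j, E j ≤ kap lam * E (j+1) +
      (if dig lam j ≠ dig lam (j+1) then (1:ℝ) else 0) := by
    intro j
    by_cases h : dig lam j = dig lam (j+1)
    · have hif : (if dig lam j ≠ dig lam (j+1) then (1:ℝ) else 0) = 0 := by simp [h]
      rw [hif, add_zero]
      exact E_contr hxv h
    · simp only [ne_eq, h, not_false_eq_true, if_true]
      have h1 := E_le_one hxv j
      have h2 : 0 ≤ kap lam * E (j+1) :=
        mul_nonneg (kap_nonneg lam) (abs_nonneg _)
      simp only [hE]
      linarith [h1, h2]
  have hsum : ∑ j ∈ Finset.range n, E j ≤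
      kap lam * (∑ j ∈ Finset.range n, E (j+1)) + (chg lam n : ℝ) := by
    calc ∑ j ∈ Finset.range n, E j
        ≤ ∑ j ∈ Finset.range n, (kap lam * E (j+1) +
          (if dig lam j ≠ dig lam (j+1) then (1:ℝ) else 0)) :=
          Finset.sum_le_sum (fun j _ => hstep j)
      _ = kap lam * (∑ j ∈ Finset.range n, E (j+1)) + (chg lam n : ℝ) := by
          rw [Finset.sum_add_distrib, Finset.mul_sum]
          congr 1
          rw [chg_card]
          rw [Finset.card_filter]
          push_cast
          rfl
  have hshift : ∑ j ∈ Finset.range n, E (j+1) ≤ (∑ j ∈ Finset.range n, E j) + 1 := by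
    have h1 : ∑ j ∈ Finset.range (n+1), E j
        = (∑ j ∈ Finset.range n, E (j+1)) + E 0 := Finset.sum_range_succ' E n
    have h2 : ∑ j ∈ Finset.range (n+1), E j
        = (∑ j ∈ Finset.range n, E j) + E n := Finset.sum_range_succ E n
    have h3 : E n ≤ 1 := E_le_one hxv n
    have h4 : 0 ≤ E 0 := abs_nonneg _
    linarith
  have hk0 := kap_nonneg lam
  have hk1 := kap_lt_one lam
  have hS0 : 0 ≤ ∑ j ∈ Finset.range n, E j :=
    Finset.sum_nonneg (fun j _ => abs_nonneg _)
  rw [le_div_iff₀ (by linarith)]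
  have := mul_le_mul_of_nonneg_left hshift hk0
  nlinarith

lemma log_deriv_eq (n : ℕ) :
    Real.log |derivTn (xv 0) n|
      = ∑ j ∈ Finset.range n, 2*Real.log ((dig lam j : ℝ) + xv (j+1)) := by
  have hterm : ∀ j, |(-(1 / (gaussMap^[j] (xv 0)) ^ 2))|
      = ((dig lam j : ℝ) + xv (j+1))^2 := by
    intro j
    rw [gauss_iter hxv j, abs_neg]
    have h1 : 1/(xv j)^2 = ((dig lam j:ℝ) + xv (j+1))^2 := by
      rw [← one_div_pow, xv_inv hxv j]
    rw [h1]
    have hpos : (0:ℝ) < (dig lam j:ℝ) + xv (j+1) := by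
      have h2 : (1:ℝ) ≤ (dig lam j : ℝ) := by exact_mod_cast one_le_dig lam j
      have := xv_pos hxv (j+1)
      linarith
    exact abs_of_pos (by positivity)
  unfold derivTn
  rw [Finset.abs_prod, Real.log_prod]
  · apply Finset.sum_congr rfl
    intro j _
    rw [hterm j]
    have h2 : (1:ℝ) ≤ (dig lam j : ℝ) := by exact_mod_cast one_le_dig lam j
    have h3 := xv_pos hxv (j+1)
    rw [Real.log_pow]
    push_cast
    ring
  · intro j _
    rw [hterm j]
    have h2 : (1:ℝ) ≤ (dig lam j : ℝ) := by exact_mod_cast one_le_dig lam j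
    have h3 := xv_pos hxv (j+1)
    positivity

lemma err_term_le (j : ℕ) :
    |2*Real.log ((dig lam j : ℝ) + xv (j+1)) - 2*ell (dig lam j)|
      ≤ 2 * |xv (j+1) - pfix (dig lam j)| := by
  have h2 : (1:ℝ) ≤ (dig lam j : ℝ) := by exact_mod_cast one_le_dig lam j
  have h3 := xv_pos hxv (j+1)
  have h4 := pfix_pos (dig lam j)
  rw [ell_def]
  have ha : (1:ℝ) ≤ (dig lam j : ℝ) + xv (j+1) := by linarith
  have hb : (1:ℝ) ≤ (dig lam j : ℝ) + pfix (dig lam j) := by linarith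
  have key := abs_log_sub_le ha hb
  have heq : ((dig lam j : ℝ) + xv (j+1)) - ((dig lam j : ℝ) + pfix (dig lam j))
      = xv (j+1) - pfix (dig lam j) := by ring
  rw [heq] at key
  have h5 : 2*Real.log ((dig lam j : ℝ) + xv (j+1))
      - 2*Real.log ((dig lam j : ℝ) + pfix (dig lam j))
      = 2*(Real.log ((dig lam j : ℝ) + xv (j+1))
      - Real.log ((dig lam j : ℝ) + pfix (dig lam j))) := by ring
  rw [h5, abs_mul, abs_two]
  linarith

end main

lemma sum_main (lam : ℝ) (n : ℕ) :
    ∑ j ∈ Finset.range n, 2*ell (dig lam j)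
      = (cnt lam n : ℝ) * (2*ell (A' lam)) + ((n:ℝ) - cnt lam n) * (2*ell 1) := by
  classical
  have hsplit := Finset.sum_filter_add_sum_filter_not (Finset.range n)
    (fun j => dig lam j = A' lam) (fun j => 2*ell (dig lam j))
  have h1 : ∑ j ∈ (Finset.range n).filter (fun j => dig lam j = A' lam),
      2*ell (dig lam j) = (cnt lam n : ℝ) * (2*ell (A' lam)) := by
    have hcongr : ∑ j ∈ (Finset.range n).filter (fun j => dig lam j = A' lam),
        2*ell (dig lam j) = ∑ _j ∈ (Finset.range n).filter
        (fun j => dig lam j = A' lam), 2*ell (A' lam) :=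
      Finset.sum_congr rfl (fun j hj => by rw [(Finset.mem_filter.1 hj).2])
    rw [hcongr, Finset.sum_const, cnt_card, nsmul_eq_mul]
  have h2 : ∑ j ∈ (Finset.range n).filter (fun j => ¬(dig lam j = A' lam)),
      2*ell (dig lam j) = ((n:ℝ) - cnt lam n) * (2*ell 1) := by
    have hcards : ((Finset.range n).filter (fun j => ¬(dig lam j = A' lam))).card
        = n - cnt lam n := by
      have := Finset.card_filter_add_card_filter_not (s := Finset.range n)
        (p := fun j => dig lam j = A' lam)
      rw [Finset.card_range] at this
      rw [cnt_card]
      omega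
    have hcongr : ∑ j ∈ (Finset.range n).filter (fun j => ¬(dig lam j = A' lam)),
        2*ell (dig lam j) = ∑ _j ∈ (Finset.range n).filter
        (fun j => ¬(dig lam j = A' lam)), 2*ell 1 := by
      apply Finset.sum_congr rfl
      intro j hj
      rcases dig_one_or_A lam j with h | h
      · rw [h]
      · exact absurd h (Finset.mem_filter.1 hj).2
    rw [hcongr, Finset.sum_const, hcards, nsmul_eq_mul]
    have hle : cnt lam n ≤ n := by
      rw [cnt_card]
      exact le_trans (Finset.card_filter_le _ _) (le_of_eq (Finset.card_range n))
    congr 1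
    push_cast [Nat.cast_sub hle]
    ring
  rw [← hsplit, h1, h2]

lemma cnt_div_tendsto {lam : ℝ} (hlam : 2 * ell 1 ≤ lam) :
    Tendsto (fun n : ℕ => (cnt lam n : ℝ)/(n:ℝ)) atTop (nhds (beta' lam)) := by
  have hbnd : Tendsto (fun n : ℕ => 2*((Nat.sqrt n : ℝ)/(n:ℝ)) + 2*(1/(n:ℝ)))
      atTop (nhds 0) := by
    have := (tendsto_sqrt_div.const_mul 2).add
      (tendsto_one_div_atTop_nhds_zero_nat.const_mul 2)
    simpa using this
  have hdiff : Tendsto (fun n : ℕ => (cnt lam n : ℝ)/(n:ℝ) - beta' lam) atTop (nhds 0) := by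
    apply squeeze_zero_norm' _ hbnd
    filter_upwards [eventually_ge_atTop 1] with n hn
    have hn0 : (0:ℝ) < (n:ℝ) := by exact_mod_cast hn
    have h1 : (cnt lam n : ℝ)/(n:ℝ) - beta' lam
        = ((cnt lam n : ℝ) - beta' lam * n)/(n:ℝ) := by
      rw [eq_div_iff (ne_of_gt hn0), sub_mul, div_mul_cancel₀ _ (ne_of_gt hn0)]
    rw [Real.norm_eq_abs, h1, abs_div, abs_of_pos hn0]
    rw [div_le_iff₀ hn0]
    have h2 := cnt_est hlam n
    have h3 : (2*((Nat.sqrt n : ℝ)/(n:ℝ)) + 2*(1/(n:ℝ))) * n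
        = 2*(Nat.sqrt n : ℝ) + 2 := by field_simp
    rw [h3]
    exact h2
  have := hdiff.add_const (beta' lam)
  simpa using this

lemma chg_div_tendsto (lam : ℝ) :
    Tendsto (fun n : ℕ => ((chg lam n : ℝ)+1)/(n:ℝ)) atTop (nhds 0) := by
  have hbnd : Tendsto (fun n : ℕ => 2*((Nat.sqrt n : ℝ)/(n:ℝ)) + 3*(1/(n:ℝ)))
      atTop (nhds 0) := by
    have := (tendsto_sqrt_div.const_mul 2).add
      (tendsto_one_div_atTop_nhds_zero_nat.const_mul 3)
    simpa using this
  apply squeeze_zero' _ _ hbnd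
  · filter_upwards [eventually_ge_atTop 1] with n hn
    positivity
  · filter_upwards [eventually_ge_atTop 1] with n hn
    have hn0 : (0:ℝ) < (n:ℝ) := by exact_mod_cast hn
    rw [div_le_iff₀ hn0]
    have h2 : (chg lam n : ℝ) ≤ 2*(Nat.sqrt n : ℝ) + 2 := by
      have h2' := chg_le lam n
      exact_mod_cast (by omega : chg lam n ≤ 2*Nat.sqrt n + 2)
    have h3 : (2*((Nat.sqrt n : ℝ)/(n:ℝ)) + 3*(1/(n:ℝ))) * n
        = 2*(Nat.sqrt n : ℝ) + 3 := by field_simp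
    rw [h3]
    linarith

theorem main_thm (lam : ℝ) (hlam : 2 * ell 1 ≤ lam) :
    ∃ x₀ : ℝ, x₀ ∈ Set.Ico (0 : ℝ) 1 ∧ Irrational x₀ ∧
      Tendsto (fun n : ℕ => (1 / (n : ℝ)) * Real.log |derivTn x₀ n|)
        atTop (nhds lam) := by
  obtain ⟨xv, hxv⟩ := exists_xv lam
  refine ⟨xv 0, ⟨le_of_lt (xv_pos hxv 0), xv_lt_one hxv 0⟩, xv_irrational hxv, ?_⟩
  have hk0 := kap_nonneg lam
  have hk1 := kap_lt_one lam
  set F : ℕ → ℝ := fun n => (1/(n:ℝ)) *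
    ∑ j ∈ Finset.range n, 2*Real.log ((dig lam j : ℝ) + xv (j+1)) with hF
  set M : ℕ → ℝ := fun n => (1/(n:ℝ)) *
    ∑ j ∈ Finset.range n, 2*ell (dig lam j) with hM
  have hM_lim : Tendsto M atTop (nhds lam) := by
    have base : Tendsto (fun n : ℕ => ((cnt lam n:ℝ)/(n:ℝ)) *
        (2*ell (A' lam) - 2*ell 1) + 2*ell 1) atTop
        (nhds (beta' lam * (2*ell (A' lam) - 2*ell 1) + 2*ell 1)) :=
      ((cnt_div_tendsto hlam).mul_const _).add_const _
    have hval : beta' lam * (2*ell (A' lam) - 2*ell 1) + 2*ell 1 = lam := by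
      have := beta_spec lam
      linarith
    rw [hval] at base
    apply base.congr'
    filter_upwards [eventually_ge_atTop 1] with n hn
    have hn0 : (0:ℝ) < (n:ℝ) := by exact_mod_cast hn
    rw [hM]
    simp only
    rw [sum_main lam n]
    field_simp
    ring
  have herr : ∀ᶠ n in atTop, ‖F n - M n‖ ≤
      (2/(1-kap lam)) * (((chg lam n : ℝ)+1)/(n:ℝ)) := by
    filter_upwards [eventually_ge_atTop 1] with n hn
    have hn0 : (0:ℝ) < (n:ℝ) := by exact_mod_cast hn
    have h1 : F n - M n = (1/(n:ℝ)) * ∑ j ∈ Finset.range n,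
        (2*Real.log ((dig lam j : ℝ) + xv (j+1)) - 2*ell (dig lam j)) := by
      rw [hF, hM]
      simp only
      rw [Finset.sum_sub_distrib]
      ring
    rw [Real.norm_eq_abs, h1, abs_mul, abs_of_pos (by positivity : (0:ℝ) < 1/(n:ℝ))]
    have h2 : |∑ j ∈ Finset.range n,
        (2*Real.log ((dig lam j : ℝ) + xv (j+1)) - 2*ell (dig lam j))|
        ≤ ∑ j ∈ Finset.range n, 2 * |xv (j+1) - pfix (dig lam j)| :=
      le_trans (Finset.abs_sum_le_sum_abs _ _)
        (Finset.sum_le_sum (fun j _ => err_term_le hxv j))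
    have h3 : ∑ j ∈ Finset.range n, 2 * |xv (j+1) - pfix (dig lam j)|
        ≤ 2 * (((chg lam n : ℝ) + 1)/(1 - kap lam)) := by
      rw [← Finset.mul_sum]
      have := sum_E_le hxv n
      linarith [sum_E_le hxv n]
    calc (1/(n:ℝ)) * |∑ j ∈ Finset.range n,
        (2*Real.log ((dig lam j : ℝ) + xv (j+1)) - 2*ell (dig lam j))|
        ≤ (1/(n:ℝ)) * (2 * (((chg lam n : ℝ) + 1)/(1 - kap lam))) := by
          apply mul_le_mul_of_nonneg_left _ (by positivity)
          exact le_trans h2 h3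
      _ = (2/(1-kap lam)) * (((chg lam n : ℝ)+1)/(n:ℝ)) := by
          field_simp
  have hbnd : Tendsto (fun n : ℕ => (2/(1-kap lam)) * (((chg lam n : ℝ)+1)/(n:ℝ)))
      atTop (nhds 0) := by
    have := (chg_div_tendsto lam).const_mul (2/(1-kap lam))
    simpa using this
  have hdiff : Tendsto (fun n : ℕ => F n - M n) atTop (nhds 0) :=
    squeeze_zero_norm' herr hbnd
  have hFlim : Tendsto F atTop (nhds lam) := by
    have := hM_lim.add hdiff
    rw [add_zero] at this
    apply this.congr
    intro n
    ring
  apply hFlim.congr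
  intro n
  rw [hF]
  simp only
  rw [← log_deriv_eq hxv n]


end LyapAux
end

/-- Every `λ ≥ 2log((1+√5)/2)` is attained as the Lyapunov exponent
`λ(x₀) = lim (1/n) log|(Tⁿ)'(x₀)|` of some `x₀ ∈ [0,1)`. -/
theorem lyapunov_exponent_attained (lam : ℝ)
    (hlam : 2 * Real.log ((1 + Real.sqrt 5) / 2) ≤ lam) :
    ∃ x₀ : ℝ, x₀ ∈ Set.Ico (0 : ℝ) 1 ∧ Irrational x₀ ∧
      Tendsto (fun n : ℕ => (1 / (n : ℝ)) * Real.log |derivTn x₀ n|)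
        atTop (nhds lam) := by
  have hlam' : 2 * LyapAux.ell 1 ≤ lam := by rw [LyapAux.ell_one]; exact hlam
  exact LyapAux.main_thm lam hlam'
end

section
/- Let φ: ℕ → ℝ₊ satisfy lim_{n→∞} φ(n)/n = ∞. Then the set E_ξ(φ) = {x ∈ [0,1) : lim_{n→∞} (1/φ(n)) Σ_{j=1}^n log aⱼ(x) = ξ} has Hausdorff dimension at most 1/2, for every ξ > 0. -/
open Filter MeasureTheory
open scoped ENNReal NNReal

lemma gaussMap_zero : gaussMap 0 = 0 := by simp [gaussMap]

lemma gaussMap_mem_Ico {x : ℝ} (hx : x ∈ Set.Ico (0:ℝ) 1) : gaussMap x ∈ Set.Ico (0:ℝ) 1 :=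
  ⟨Int.fract_nonneg _, Int.fract_lt_one _⟩

lemma one_le_cfA0 {x : ℝ} (hx : x ∈ Set.Ioo (0:ℝ) 1) : 1 ≤ ⌊1 / x⌋₊ := by
  have h1 : (1:ℝ) < 1 / x := one_lt_one_div hx.1 hx.2
  exact Nat.le_floor (by exact_mod_cast h1.le)

lemma x_eq {x : ℝ} (hx : x ∈ Set.Ioo (0:ℝ) 1) :
    x = 1 / ((⌊1 / x⌋₊ : ℝ) + gaussMap x) := by
  have h0 : (0:ℝ) < 1 / x := one_div_pos.2 hx.1
  have hfl : ((⌊1 / x⌋₊ : ℝ)) = ((⌊1/x⌋ : ℤ) : ℝ) := by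
    exact_mod_cast congrArg (Int.cast : ℤ → ℝ) (Int.natCast_floor_eq_floor h0.le)
  have : ((⌊1 / x⌋₊ : ℝ)) + gaussMap x = 1 / x := by
    rw [hfl, gaussMap, Int.fract]; ring
  rw [this]
  field_simp

/-- Cylinder set of depth `n` with prescribed partial quotients. -/
def cyl (n : ℕ) (c : ℕ → ℕ) : Set ℝ :=
  {x | (∀ j ≤ n, gaussMap^[j] x ∈ Set.Ioo (0:ℝ) 1) ∧ ∀ j < n, cfA x j = c j}

lemma cyl_shift {n : ℕ} {c : ℕ → ℕ} {x : ℝ} (hx : x ∈ cyl (n+1) c) :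
    gaussMap x ∈ cyl n (fun j => c (j+1)) := by
  refine ⟨fun j hj => ?_, fun j hj => ?_⟩
  · rw [← Function.iterate_succ_apply]
    exact hx.1 (j+1) (Nat.succ_le_succ hj)
  · have h := hx.2 (j+1) (Nat.succ_lt_succ hj)
    simp only [cfA, Function.iterate_succ_apply] at h
    simpa only [cfA] using h

lemma contract {c u v : ℝ} (hc : 1 ≤ c) (hu : 0 ≤ u) (hv : 0 ≤ v) :
    |1/(c+u) - 1/(c+v)| ≤ |u - v| / c^2 := by
  have hcu : (0:ℝ) < c + u := by linarith
  have hcv : (0:ℝ) < c + v := by linarith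
  have hp : (0:ℝ) < (c+u)*(c+v) := mul_pos hcu hcv
  have hc2 : (0:ℝ) < c^2 := by nlinarith
  have he : 1/(c+u) - 1/(c+v) = (v-u)/((c+u)*(c+v)) := by
    field_simp
    ring
  rw [he, abs_div, abs_of_pos hp, abs_sub_comm]
  exact div_le_div_of_nonneg_left (abs_nonneg _) hc2 (by nlinarith)

lemma cyl_diam : ∀ (n : ℕ) (c : ℕ → ℕ) (x y : ℝ), x ∈ cyl n c → y ∈ cyl n c →
    |x - y| ≤ ∏ j ∈ Finset.range n, ((c j : ℝ))⁻¹ ^ 2 := by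
  intro n
  induction n with
  | zero =>
    intro c x y hx hy
    have h1 := hx.1 0 le_rfl
    have h2 := hy.1 0 le_rfl
    simp only [Function.iterate_zero_apply, Set.mem_Ioo] at h1 h2
    simp only [Finset.range_zero, Finset.prod_empty]
    rw [abs_sub_le_iff]; constructor <;> linarith
  | succ n ih =>
    intro c x y hx hy
    have hx0 : x ∈ Set.Ioo (0:ℝ) 1 := by simpa using hx.1 0 (Nat.zero_le _)
    have hy0 : y ∈ Set.Ioo (0:ℝ) 1 := by simpa using hy.1 0 (Nat.zero_le _)
    have hcx : ⌊1 / x⌋₊ = c 0 := by simpa [cfA] using hx.2 0 (Nat.succ_pos _)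
    have hcy : ⌊1 / y⌋₊ = c 0 := by simpa [cfA] using hy.2 0 (Nat.succ_pos _)
    have hc1 : 1 ≤ c 0 := hcx ▸ one_le_cfA0 hx0
    have hc1' : (1:ℝ) ≤ (c 0 : ℝ) := by exact_mod_cast hc1
    have hex : x = 1 / ((c 0 : ℝ) + gaussMap x) := by rw [← hcx]; exact x_eq hx0
    have hey : y = 1 / ((c 0 : ℝ) + gaussMap y) := by rw [← hcy]; exact x_eq hy0
    have hIH := ih (fun j => c (j+1)) _ _ (cyl_shift hx) (cyl_shift hy)
    calc |x - y| = |1/((c 0:ℝ) + gaussMap x) - 1/((c 0:ℝ) + gaussMap y)| := by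
            rw [← hex, ← hey]
      _ ≤ |gaussMap x - gaussMap y| / (c 0 : ℝ)^2 :=
            contract hc1' (Int.fract_nonneg _) (Int.fract_nonneg _)
      _ ≤ (∏ j ∈ Finset.range n, ((c (j+1) : ℝ))⁻¹ ^ 2) * ((c 0:ℝ))⁻¹ ^ 2 := by
            rw [div_eq_mul_inv, ← inv_pow]
            exact mul_le_mul_of_nonneg_right hIH (by positivity)
      _ = ∏ j ∈ Finset.range (n+1), ((c j : ℝ))⁻¹ ^ 2 :=
            (Finset.prod_range_succ' (fun j => ((c j : ℝ))⁻¹ ^ 2) n).symm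

lemma prod_rpow_eq_exp {n : ℕ} {b : ℕ → ℕ} (hb : ∀ j ∈ Finset.range n, 1 ≤ b j) (r : ℝ) :
    ∏ j ∈ Finset.range n, ((b j : ℝ)) ^ r
      = Real.exp (r * ∑ j ∈ Finset.range n, Real.log (b j)) := by
  have h : ∀ j ∈ Finset.range n, ((b j : ℝ)) ^ r = Real.exp (r * Real.log (b j)) := by
    intro j hj
    have hb0 : (0:ℝ) < b j := by exact_mod_cast hb j hj
    rw [Real.rpow_def_of_pos hb0, mul_comm]
  rw [Finset.prod_congr rfl h, ← Real.exp_sum, Finset.mul_sum]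

lemma prod_inv_sq_eq {n : ℕ} {b : ℕ → ℕ} (hb : ∀ j ∈ Finset.range n, 1 ≤ b j) :
    ∏ j ∈ Finset.range n, ((b j : ℝ))⁻¹ ^ 2
      = Real.exp (-(2 * ∑ j ∈ Finset.range n, Real.log (b j))) := by
  have h : ∀ j ∈ Finset.range n, ((b j : ℝ))⁻¹ ^ 2 = ((b j : ℝ)) ^ (-2 : ℝ) := by
    intro j hj
    have hb0 : (0:ℝ) < b j := by exact_mod_cast hb j hj
    rw [show ((-2:ℝ)) = -((2:ℕ):ℝ) by norm_num, Real.rpow_neg hb0.le, Real.rpow_natCast, inv_pow]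
  rw [Finset.prod_congr rfl h, prod_rpow_eq_exp hb, neg_mul]

lemma sum_nonneg_logs {n : ℕ} {b : ℕ → ℕ} (hb : ∀ j ∈ Finset.range n, 1 ≤ b j) :
    0 ≤ ∑ j ∈ Finset.range n, Real.log (b j) :=
  Finset.sum_nonneg fun j hj => Real.log_nonneg (by exact_mod_cast hb j hj)

lemma key_real {n : ℕ} {b : ℕ → ℕ} (hb : ∀ j ∈ Finset.range n, 1 ≤ b j) {M δ D : ℝ}
    (hδ : 0 < δ) (h2D : 2 * D = 1 + 2 * δ)
    (hM : M * n ≤ ∑ j ∈ Finset.range n, Real.log (b j)) :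
    (∏ j ∈ Finset.range n, ((b j : ℝ))⁻¹ ^ 2) ^ D ≤
      Real.exp (-(δ * (M * n))) * ∏ j ∈ Finset.range n, ((b j : ℝ)) ^ (-(1+δ)) := by
  set S := ∑ j ∈ Finset.range n, Real.log (b j) with hS
  rw [prod_inv_sq_eq hb, prod_rpow_eq_exp hb, Real.rpow_def_of_pos (Real.exp_pos _),
      Real.log_exp]
  rw [← Real.exp_add]
  apply Real.exp_le_exp.2
  have h2D' : S*(2*D) = S*(1+2*δ) := by rw [h2D]
  have hMS : δ*(M*(n:ℝ)) ≤ δ*S := mul_le_mul_of_nonneg_left hM hδ.le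
  nlinarith [h2D', hMS]

lemma tsum_pi_prod (g : ℕ → ℝ≥0∞) : ∀ n : ℕ,
    (∑' (c : Fin n → ℕ), ∏ j : Fin n, g (c j)) = (∑' (a : ℕ), g a) ^ n := by
  intro n
  induction n with
  | zero =>
    rw [pow_zero]
    rw [tsum_eq_single (fun j : Fin 0 => (0:ℕ))
      (fun b hb => (hb (funext fun j => j.elim0)).elim)]
    simp
  | succ n ih =>
    calc (∑' (c : Fin (n+1) → ℕ), ∏ j : Fin (n+1), g (c j))
        = ∑' (p : ℕ × (Fin n → ℕ)), ∏ j : Fin (n+1), g ((Fin.consEquiv (fun _ => ℕ)) p j) :=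
          ((Fin.consEquiv (fun _ => ℕ)).tsum_eq _).symm
      _ = ∑' (p : ℕ × (Fin n → ℕ)), g p.1 * ∏ j : Fin n, g (p.2 j) := by
          refine tsum_congr fun p => ?_
          simp [Fin.prod_univ_succ, Fin.consEquiv]
      _ = (∑' (a : ℕ), g a) * (∑' (b : Fin n → ℕ), ∏ j : Fin n, g (b j)) := by
          rw [ENNReal.tsum_prod']
          simp_rw [ENNReal.tsum_mul_left]
          rw [ENNReal.tsum_mul_right]
      _ = (∑' (a : ℕ), g a) ^ (n+1) := by rw [ih, pow_succ, mul_comm]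

lemma one_le_cfA {x : ℝ} {j : ℕ} (h : gaussMap^[j] x ∈ Set.Ioo (0:ℝ) 1) : 1 ≤ cfA x j :=
  one_le_cfA0 h

lemma cyl_ediam {n : ℕ} {c : ℕ → ℕ} :
    EMetric.diam (cyl n c) ≤ ENNReal.ofReal (∏ j ∈ Finset.range n, ((c j : ℝ))⁻¹ ^ 2) := by
  apply EMetric.diam_le
  intro x hx y hy
  rw [edist_dist, Real.dist_eq]
  exact ENNReal.ofReal_le_ofReal (cyl_diam n c x y hx hy)

/-- The auxiliary set of points with superlinear growth of log-partial-quotient sums. -/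
def FSet (M : ℝ) (N : ℕ) : Set ℝ :=
  {x | (∀ j, gaussMap^[j] x ∈ Set.Ioo (0:ℝ) 1) ∧
       ∀ n, N ≤ n → M * n ≤ ∑ j ∈ Finset.range n, Real.log (cfA x j)}

lemma exists_M (d : ℝ≥0) (hd : 1/2 < (d:ℝ)) :
    ∃ M : ℝ, 0 < M ∧ ∀ N : ℕ, μH[(d:ℝ)] (FSet M N) = 0 := by
  classical
  set D := (d:ℝ) with hDdef
  set δ := D - 1/2 with hδdef
  have hδ : 0 < δ := by rw [hδdef]; linarith
  have hD0 : 0 < D := by linarith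
  have h2D : 2*D = 1 + 2*δ := by rw [hδdef]; ring
  have hsum : Summable (fun a : ℕ => (a:ℝ) ^ (-(1+δ))) :=
    Real.summable_nat_rpow.2 (by linarith)
  set K' := ∑' (a : ℕ), ((a:ℝ) ^ (-(1+δ))) with hK'
  have hK'0 : 0 ≤ K' := tsum_nonneg fun a => Real.rpow_nonneg (Nat.cast_nonneg a) _
  set g : ℕ → ℝ≥0∞ := fun a => ENNReal.ofReal ((a:ℝ) ^ (-(1+δ))) with hg
  have hKg : (∑' (a : ℕ), g a) = ENNReal.ofReal K' :=
    (ENNReal.ofReal_tsum_of_nonneg (fun a => Real.rpow_nonneg (Nat.cast_nonneg a) _) hsum).symm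
  set M := (Real.log (K' + 1) + 1) / δ with hMdef
  have hlog0 : 0 ≤ Real.log (K' + 1) := Real.log_nonneg (by linarith)
  have hM : 0 < M := div_pos (by linarith) hδ
  set θ : ℝ≥0∞ := ENNReal.ofReal (Real.exp (-1)) with hθdef
  have hθ1 : θ < 1 := by
    rw [hθdef]
    apply ENNReal.ofReal_lt_one.2
    calc Real.exp (-1) < Real.exp 0 := Real.exp_lt_exp.2 (by norm_num)
      _ = 1 := Real.exp_zero
  have keyθ : ENNReal.ofReal (Real.exp (-(δ*M))) * (∑' (a:ℕ), g a) ≤ θ := by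
    rw [hKg, ← ENNReal.ofReal_mul (Real.exp_pos _).le, hθdef]
    apply ENNReal.ofReal_le_ofReal
    have hδM : δ * M = Real.log (K'+1) + 1 := by
      rw [hMdef]; field_simp
    rw [hδM]
    have he : Real.exp (-(Real.log (K'+1) + 1)) = (K'+1)⁻¹ * Real.exp (-1) := by
      rw [neg_add, Real.exp_add, Real.exp_neg, Real.exp_log (by linarith)]
    rw [he]
    have h2 : (K'+1)⁻¹ * Real.exp (-1) * K' ≤ (K'+1)⁻¹ * Real.exp (-1) * (K'+1) :=
      mul_le_mul_of_nonneg_left (by linarith) (by positivity)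
    calc (K'+1)⁻¹ * Real.exp (-1) * K' ≤ (K'+1)⁻¹ * Real.exp (-1) * (K'+1) := h2
      _ = Real.exp (-1) := by field_simp
  refine ⟨M, hM, fun N => ?_⟩
  set ext : ∀ n : ℕ, (Fin n → ℕ) → ℕ → ℕ := fun n c j => if h : j < n then c ⟨j, h⟩ else 1
    with hext
  set valid : ∀ n : ℕ, (Fin n → ℕ) → Prop := fun n c =>
    (∀ j ∈ Finset.range n, 1 ≤ ext n c j) ∧
      M * n ≤ ∑ j ∈ Finset.range n, Real.log (ext n c j) with hvalid
  set t : ∀ n : ℕ, (Fin n → ℕ) → Set ℝ := fun n c => if valid n c then cyl n (ext n c) else ∅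
    with htdef
  have hle := Measure.hausdorffMeasure_le_liminf_tsum (X := ℝ) D (FSet M N) (l := atTop)
      (fun n : ℕ => ENNReal.ofReal (Real.exp (-(2*(M*(n:ℝ)))))) ?_ t ?_ ?_
  · -- conclude : the liminf is 0
    have hsumb : ∀ n : ℕ, (∑' (c : Fin n → ℕ), EMetric.diam (t n c) ^ D) ≤ θ ^ n := by
      intro n
      have hterm : ∀ c : Fin n → ℕ, EMetric.diam (t n c) ^ D ≤
          ENNReal.ofReal (Real.exp (-(δ*(M*n)))) * ∏ j : Fin n, g (c j) := by
        intro c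
        by_cases hv : valid n c
        · have hb : ∀ j ∈ Finset.range n, 1 ≤ ext n c j := hv.1
          have hP0 : (0:ℝ) ≤ ∏ j ∈ Finset.range n, ((ext n c j : ℝ))⁻¹ ^ 2 :=
            Finset.prod_nonneg fun j _ => by positivity
          have hdiam : EMetric.diam (t n c) ≤
              ENNReal.ofReal (∏ j ∈ Finset.range n, ((ext n c j : ℝ))⁻¹ ^ 2) := by
            rw [htdef]; simp only [if_pos hv]; exact cyl_ediam
          calc EMetric.diam (t n c) ^ D
              ≤ (ENNReal.ofReal (∏ j ∈ Finset.range n, ((ext n c j : ℝ))⁻¹ ^ 2)) ^ D :=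
                ENNReal.rpow_le_rpow hdiam hD0.le
            _ = ENNReal.ofReal ((∏ j ∈ Finset.range n, ((ext n c j : ℝ))⁻¹ ^ 2) ^ D) :=
                ENNReal.ofReal_rpow_of_nonneg hP0 hD0.le
            _ ≤ ENNReal.ofReal (Real.exp (-(δ*(M*n))) *
                  ∏ j ∈ Finset.range n, ((ext n c j : ℝ)) ^ (-(1+δ))) :=
                ENNReal.ofReal_le_ofReal (key_real hb hδ h2D hv.2)
            _ = ENNReal.ofReal (Real.exp (-(δ*(M*n)))) *
                  ∏ j ∈ Finset.range n, ENNReal.ofReal (((ext n c j : ℝ)) ^ (-(1+δ))) := by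
                rw [ENNReal.ofReal_mul (Real.exp_pos _).le,
                  ENNReal.ofReal_prod_of_nonneg
                    (fun i _ => Real.rpow_nonneg (Nat.cast_nonneg _) _)]
            _ = ENNReal.ofReal (Real.exp (-(δ*(M*n)))) * ∏ j : Fin n, g (c j) := by
                congr 1
                rw [← Fin.prod_univ_eq_prod_range
                  (fun j => ENNReal.ofReal (((ext n c j : ℝ)) ^ (-(1+δ)))) n]
                exact Finset.prod_congr rfl fun j _ => by
                  simp only [hext, hg, j.isLt, dif_pos, Fin.eta]
        · have hte : t n c = ∅ := by rw [htdef]; simp only [if_neg hv]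
          rw [hte, show EMetric.diam (∅ : Set ℝ) = 0 from EMetric.diam_empty, ENNReal.zero_rpow_of_pos hD0]
          exact zero_le
      calc (∑' (c : Fin n → ℕ), EMetric.diam (t n c) ^ D)
          ≤ ∑' (c : Fin n → ℕ), ENNReal.ofReal (Real.exp (-(δ*(M*n)))) * ∏ j : Fin n, g (c j) :=
            ENNReal.tsum_le_tsum hterm
        _ = ENNReal.ofReal (Real.exp (-(δ*(M*n)))) * (∑' (a:ℕ), g a) ^ n := by
            rw [ENNReal.tsum_mul_left, tsum_pi_prod]
        _ = (ENNReal.ofReal (Real.exp (-(δ*M))))^n * (∑' (a:ℕ), g a) ^ n := by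
            congr 1
            rw [← ENNReal.ofReal_pow (Real.exp_pos _).le, ← Real.exp_nat_mul]
            congr 1
            push_cast
            ring
        _ = (ENNReal.ofReal (Real.exp (-(δ*M))) * (∑' (a:ℕ), g a)) ^ n := (mul_pow _ _ n).symm
        _ ≤ θ ^ n := pow_le_pow_left' keyθ n
    refine le_antisymm (le_trans hle ?_) zero_le
    have h0 : Filter.liminf (fun n : ℕ => θ ^ n) atTop = 0 :=
      (ENNReal.tendsto_pow_atTop_nhds_zero_of_lt_one hθ1).liminf_eq
    calc Filter.liminf (fun n : ℕ => ∑' (c : Fin n → ℕ), EMetric.diam (t n c) ^ D) atTop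
        ≤ Filter.liminf (fun n : ℕ => θ ^ n) atTop :=
          Filter.liminf_le_liminf (Filter.Eventually.of_forall hsumb)
      _ = 0 := h0
  · -- r → 0
    have h1 : Tendsto (fun n : ℕ => (2*M) * (n:ℝ)) atTop atTop :=
      tendsto_natCast_atTop_atTop.const_mul_atTop (by positivity)
    have h2 : Tendsto (fun n : ℕ => -(2*(M*(n:ℝ)))) atTop atBot := by
      apply tendsto_neg_atBot_iff.2
      exact h1.congr fun n => by ring
    have h3 : Tendsto (fun n : ℕ => Real.exp (-(2*(M*(n:ℝ))))) atTop (nhds 0) :=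
      Real.tendsto_exp_atBot.comp h2
    have h4 := ENNReal.tendsto_ofReal h3
    simpa using h4
  · -- diameters small
    filter_upwards with n c
    by_cases hv : valid n c
    · rw [htdef]
      simp only [if_pos hv]
      refine le_trans cyl_ediam (ENNReal.ofReal_le_ofReal ?_)
      rw [prod_inv_sq_eq hv.1]
      exact Real.exp_le_exp.2 (by nlinarith [hv.2])
    · rw [htdef]; simp only [if_neg hv]; simp
  · -- covering
    filter_upwards [eventually_ge_atTop N] with n hn x hx
    refine Set.mem_iUnion.2 ⟨fun j : Fin n => cfA x j, ?_⟩
    have hc : ∀ j ∈ Finset.range n, ext n (fun j : Fin n => cfA x j) j = cfA x j := by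
      intro j hj
      simp only [hext, Finset.mem_range.1 hj, dif_pos]
    have hvx : valid n (fun j : Fin n => cfA x j) := by
      constructor
      · intro j hj
        rw [hc j hj]
        exact one_le_cfA (hx.1 j)
      · rw [Finset.sum_congr rfl fun j hj => by rw [hc j hj]]
        exact hx.2 n hn
    have : t n (fun j : Fin n => cfA x j) = cyl n (ext n (fun j : Fin n => cfA x j)) := by
      rw [htdef]; simp only [if_pos hvx]
    rw [this]
    exact ⟨fun j _ => hx.1 j, fun j hj => (hc j (Finset.mem_range.2 hj)).symm⟩

lemma iter_zero {x : ℝ} {j : ℕ} (h : gaussMap^[j] x = 0) {m : ℕ} (hm : j ≤ m) :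
    gaussMap^[m] x = 0 := by
  obtain ⟨k, rfl⟩ := Nat.exists_eq_add_of_le hm
  clear hm
  induction k with
  | zero => simpa using h
  | succ k ih =>
    rw [show j + (k+1) = (j+k)+1 from rfl, Function.iterate_succ_apply', ih, gaussMap_zero]

lemma iter_mem_Ico {x : ℝ} (hx : x ∈ Set.Ico (0:ℝ) 1) (j : ℕ) :
    gaussMap^[j] x ∈ Set.Ico (0:ℝ) 1 := by
  induction j with
  | zero => simpa
  | succ j _ =>
    rw [Function.iterate_succ_apply']
    exact ⟨Int.fract_nonneg _, Int.fract_lt_one _⟩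

/-- If `φ(n)/n → ∞`, then for every `ξ > 0` the level set
`E_ξ(φ) = {x ∈ [0,1) : lim (1/φ(n)) Σ_{j=1}^n log aⱼ(x) = ξ}` has Hausdorff
dimension at most `1/2`. -/
theorem dimH_fast_khintchine_le_half (φ : ℕ → ℝ) (hφpos : ∀ n, 0 < φ n)
    (hφ : Tendsto (fun n : ℕ => φ n / n) atTop atTop) (ξ : ℝ) (hξ : 0 < ξ) :
    dimH {x : ℝ | x ∈ Set.Ico (0 : ℝ) 1 ∧
        Tendsto (fun n : ℕ => (∑ j ∈ Finset.range n, Real.log (cfA x j)) / φ n)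
          atTop (nhds ξ)} ≤ 1 / 2 := by
  set E := {x : ℝ | x ∈ Set.Ico (0 : ℝ) 1 ∧
        Tendsto (fun n : ℕ => (∑ j ∈ Finset.range n, Real.log (cfA x j)) / φ n)
          atTop (nhds ξ)} with hE
  have hφtop : Tendsto φ atTop atTop := by
    apply tendsto_atTop_mono' atTop _ tendsto_natCast_atTop_atTop
    filter_upwards [hφ.eventually_ge_atTop 1, eventually_ge_atTop 1] with n h1 hn1
    have hn0 : (0:ℝ) < n := by exact_mod_cast hn1
    rw [le_div_iff₀ hn0, one_mul] at h1
    exact h1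
  have hgood : ∀ x ∈ E, ∀ j, gaussMap^[j] x ∈ Set.Ioo (0:ℝ) 1 := by
    intro x hx j
    by_contra hbad
    have hIco := iter_mem_Ico hx.1 j
    have h0 : gaussMap^[j] x = 0 := by
      rcases eq_or_lt_of_le hIco.1 with h | h
      · exact h.symm
      · exact absurd ⟨h, hIco.2⟩ hbad
    have hconst : ∀ n, j ≤ n → (∑ i ∈ Finset.range n, Real.log (cfA x i))
        = ∑ i ∈ Finset.range j, Real.log (cfA x i) := by
      intro n hn
      refine (Finset.sum_subset (Finset.range_subset_range.2 hn) ?_).symm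
      intro i _ hnot
      have hji : j ≤ i := Nat.le_of_not_lt (fun h => hnot (Finset.mem_range.2 h))
      have hz : gaussMap^[i] x = 0 := iter_zero h0 hji
      simp [cfA, hz]
    have htends0 : Tendsto (fun n : ℕ =>
        (∑ i ∈ Finset.range n, Real.log (cfA x i)) / φ n) atTop (nhds 0) := by
      have h1 : Tendsto (fun n : ℕ =>
          (∑ i ∈ Finset.range j, Real.log (cfA x i)) / φ n) atTop (nhds 0) :=
        Tendsto.div_atTop tendsto_const_nhds hφtop
      apply h1.congr'
      filter_upwards [eventually_ge_atTop j] with n hn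
      rw [hconst n hn]
    have := tendsto_nhds_unique hx.2 htends0
    linarith
  by_contra hcon
  push_neg at hcon
  obtain ⟨d', hd1, hd2⟩ := ENNReal.lt_iff_exists_nnreal_btwn.1 hcon
  have hdnn : (1/2 : ℝ≥0) < d' := by
    have h12 : ((1/2 : ℝ≥0) : ℝ≥0∞) = 1/2 := by
      rw [ENNReal.coe_div (by norm_num)]; norm_num
    exact ENNReal.coe_lt_coe.1 (h12.symm ▸ hd1)
  have hd : (1/2 : ℝ) < (d' : ℝ) := by exact_mod_cast hdnn
  obtain ⟨M, hM, hzero⟩ := exists_M d' hd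
  have hsub : E ⊆ ⋃ N : ℕ, FSet M N := by
    intro x hx
    have hev1 := hx.2.eventually (eventually_gt_nhds (by linarith : ξ/2 < ξ))
    have hev2 := hφ.eventually_ge_atTop (2*M/ξ)
    obtain ⟨N, hN⟩ := Filter.eventually_atTop.1 ((hev1.and hev2).and (eventually_ge_atTop 1))
    refine Set.mem_iUnion.2 ⟨N, hgood x hx, fun n hn => ?_⟩
    obtain ⟨⟨ha, hb⟩, hc⟩ := hN n hn
    have hn0 : (0:ℝ) < n := by exact_mod_cast hc
    have hφn := hφpos n
    have h1 : (ξ/2) * φ n < ∑ i ∈ Finset.range n, Real.log (cfA x i) :=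
      (lt_div_iff₀ hφn).1 ha
    have h2 : (2*M/ξ) * n ≤ φ n := (le_div_iff₀ hn0).1 hb
    calc M * n = (ξ/2) * ((2*M/ξ) * n) := by field_simp
      _ ≤ (ξ/2) * φ n := mul_le_mul_of_nonneg_left h2 (by linarith)
      _ ≤ _ := h1.le
  have hle : dimH E ≤ (d' : ℝ≥0∞) := by
    calc dimH E ≤ dimH (⋃ N : ℕ, FSet M N) := dimH_mono hsub
      _ = ⨆ N : ℕ, dimH (FSet M N) := dimH_iUnion _
      _ ≤ (d' : ℝ≥0∞) := iSup_le fun N =>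
          dimH_le_of_hausdorffMeasure_ne_top (by rw [hzero N]; exact ENNReal.zero_ne_top)
  exact absurd hd2 (not_lt.2 hle)
end
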